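/- arXiv:1808.01375 — 6 statements merged into one kernel-verified Lean document; each statement's English description precedes it below -/
import Mathlib

section
/- For every right R-module N and every graded right R-module M of finite graded length, there is a natural isomorphism Hom_R(N, qM) ≅ Hom_{Gr-R}(pN, M). Thus on modules of finite graded length, p behaves as a left adjoint to q. -/
open DirectSum

/-- A `ℤ`-graded module over a `ℤ`-graded ring `R` with grading `𝒜`. -/
structure GradedMod (R : Type) [Ring R] (𝒜 : ℤ → AddSubgroup R) where
  carrier : Type
  [acg : AddCommGroup carrier]
  [mod : Module R carrier]
  grading : ℤ → AddSubgroup carrier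
  decomp : DirectSum.Decomposition grading
  smul_mem : ∀ {i j : ℤ} {r : R} {m : carrier},
    r ∈ 𝒜 i → m ∈ grading j → r • m ∈ grading (i + j)

attribute [instance] GradedMod.acg GradedMod.mod

/-- A degree-zero morphism of graded modules. -/
structure GradedHom (R : Type) [Ring R] {𝒜 : ℤ → AddSubgroup R}
    (M N : GradedMod R 𝒜) where
  toFun : M.carrier →ₗ[R] N.carrier
  map_mem : ∀ (n : ℤ) (x : M.carrier), x ∈ M.grading n → toFun x ∈ N.grading n

/-- `P` is (isomorphic in `Gr-R` to) the pull-up `pN` of the module `N`: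
each homogeneous component of `P` is a copy of `N`, compatibly with the action of
homogeneous elements of `R` (which shift degrees). -/
structure IsPullUp (R : Type) [Ring R] (𝒜 : ℤ → AddSubgroup R)
    (N : Type) [AddCommGroup N] [Module R N] (P : GradedMod R 𝒜) where
  equiv : ∀ n : ℤ, P.grading n ≃+ N
  compat : ∀ (j n : ℤ) (r : R) (m : P.carrier) (hr : r ∈ 𝒜 j) (hm : m ∈ P.grading n),
    equiv (j + n) ⟨r • m, P.smul_mem hr hm⟩ = r • (equiv n ⟨m, hm⟩)

/-- A module is gradable if it admits a compatible `ℤ`-grading. -/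
def IsGradable (R : Type) [Ring R] (𝒜 : ℤ → AddSubgroup R)
    (N : Type) [AddCommGroup N] [Module R N] : Prop :=
  ∃ ℳ : ℤ → AddSubgroup N, Nonempty (DirectSum.Decomposition ℳ) ∧
    ∀ ⦃i j : ℤ⦄ ⦃r : R⦄ ⦃m : N⦄, r ∈ 𝒜 i → m ∈ ℳ j → r • m ∈ ℳ (i + j)

/-- The ring of degree-zero endomorphisms of a graded module,
i.e. its endomorphism ring in `Gr-R`, as a subring of the full endomorphism ring. -/
def gradedEnd (R : Type) [Ring R] {𝒜 : ℤ → AddSubgroup R} (M : GradedMod R 𝒜) :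
    Subring (Module.End R M.carrier) where
  carrier := {f | ∀ (n : ℤ) (x : M.carrier), x ∈ M.grading n → f x ∈ M.grading n}
  mul_mem' := fun hf hg n x hx => hf n _ (hg n x hx)
  one_mem' := fun _ _ hx => hx
  add_mem' := fun hf hg n x hx => add_mem (hf n x hx) (hg n x hx)
  zero_mem' := fun n _ _ => zero_mem (M.grading n)
  neg_mem' := fun hf n x hx => neg_mem (hf n x hx)

/-- Indecomposability of a module, via idempotent endomorphisms. -/
def IsIndec (R : Type) [Ring R] (N : Type) [AddCommGroup N] [Module R N] : Prop :=
  Nontrivial N ∧ ∀ f : Module.End R N, f * f = f → f = 0 ∨ f = 1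

/-- Indecomposability of a graded module in `Gr-R`, via idempotent degree-zero
endomorphisms. -/
def GradedIndec (R : Type) [Ring R] {𝒜 : ℤ → AddSubgroup R} (M : GradedMod R 𝒜) : Prop :=
  Nontrivial M.carrier ∧
    ∀ f ∈ gradedEnd R M, f * f = f → f = 0 ∨ f = 1

/-- The initial subring `R₀ = 𝒜 0` of a graded ring. -/
def degZero (R : Type) [Ring R] (𝒜 : ℤ → AddSubgroup R) [GradedRing 𝒜] : Subring R where
  carrier := 𝒜 0
  one_mem' := SetLike.one_mem_graded 𝒜
  mul_mem' := fun {a b} ha hb => by simpa using SetLike.mul_mem_graded ha hb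
  add_mem' := fun ha hb => add_mem ha hb
  zero_mem' := zero_mem _
  neg_mem' := fun h => neg_mem h

instance gradingSMul (R : Type) [Ring R] (𝒜 : ℤ → AddSubgroup R) [GradedRing 𝒜]
    (M : GradedMod R 𝒜) (n : ℤ) : SMul (degZero R 𝒜) (M.grading n) :=
  ⟨fun r m => ⟨(r : R) • (m : M.carrier), by
    have hr : (r : R) ∈ 𝒜 0 := r.2
    simpa using M.smul_mem hr m.2⟩⟩

instance gradingMulAction (R : Type) [Ring R] (𝒜 : ℤ → AddSubgroup R) [GradedRing 𝒜]
    (M : GradedMod R 𝒜) (n : ℤ) : MulAction (degZero R 𝒜) (M.grading n) where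
  one_smul m := Subtype.ext
    (show ((1 : degZero R 𝒜) : R) • (m : M.carrier) = m by simp)
  mul_smul r s m := Subtype.ext
    (show ((r * s : degZero R 𝒜) : R) • (m : M.carrier)
        = (r : R) • ((s : R) • (m : M.carrier)) by simp [mul_smul])

instance gradingDistribMulAction (R : Type) [Ring R] (𝒜 : ℤ → AddSubgroup R) [GradedRing 𝒜]
    (M : GradedMod R 𝒜) (n : ℤ) : DistribMulAction (degZero R 𝒜) (M.grading n) where
  smul_zero r := Subtype.ext
    (show (r : R) • ((0 : M.grading n) : M.carrier) = ((0 : M.grading n) : M.carrier) by simp)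
  smul_add r x y := Subtype.ext
    (show (r : R) • ((x + y : M.grading n) : M.carrier)
        = (r : R) • (x : M.carrier) + (r : R) • (y : M.carrier) by
      simp [smul_add])

/-- Each homogeneous component of a graded module is a module over the initial
subring `R₀`. -/
instance gradingModule (R : Type) [Ring R] (𝒜 : ℤ → AddSubgroup R) [GradedRing 𝒜]
    (M : GradedMod R 𝒜) (n : ℤ) : Module (degZero R 𝒜) (M.grading n) where
  add_smul r s m := Subtype.ext
    (show ((r + s : degZero R 𝒜) : R) • (m : M.carrier)
        = (r : R) • (m : M.carrier) + (s : R) • (m : M.carrier) by simp [add_smul])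
  zero_smul m := Subtype.ext
    (show ((0 : degZero R 𝒜) : R) • (m : M.carrier) = ((0 : M.grading n) : M.carrier) by simp)

/-- A module is pure-projective if it is a direct summand of a direct sum of
finitely presented modules. -/
def IsPureProjective (S : Type) [Ring S] (P : Type) [AddCommGroup P] [Module S P] : Prop :=
  ∃ (ι : Type) (F : ι → ModuleCat.{0} S), (∀ i, Module.FinitePresentation S (F i)) ∧
    ∃ (s : P →ₗ[S] ⨁ i, (F i : Type)) (r : (⨁ i, (F i : Type)) →ₗ[S] P),
      r.comp s = LinearMap.id

/-- `R` has finite representation type: finitely many finitely generated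
indecomposable modules up to isomorphism. -/
def FinRepType (R : Type) [Ring R] : Prop :=
  ∃ (n : ℕ) (F : Fin n → ModuleCat.{0} R),
    ∀ (N : Type) [AddCommGroup N] [Module R N], Module.Finite R N → IsIndec R N →
      ∃ i, Nonempty (N ≃ₗ[R] (F i : Type))

/-- There are only finitely many finitely generated indecomposable gradable
modules up to isomorphism. -/
def FinManyGradable (R : Type) [Ring R] (𝒜 : ℤ → AddSubgroup R) : Prop :=
  ∃ (n : ℕ) (F : Fin n → ModuleCat.{0} R),
    ∀ (N : Type) [AddCommGroup N] [Module R N], Module.Finite R N → IsIndec R N →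
      IsGradable R 𝒜 N → ∃ i, Nonempty (N ≃ₗ[R] (F i : Type))

/-- `b` is a bound on the graded lengths of all finitely generated indecomposable
graded modules. -/
def BoundedGrLength (R : Type) [Ring R] (𝒜 : ℤ → AddSubgroup R) (b : ℕ) : Prop :=
  ∀ M : GradedMod R 𝒜, Module.Finite R M.carrier → GradedIndec R M →
    ∀ m n : ℤ, M.grading m ≠ ⊥ → M.grading n ≠ ⊥ → m - n + 1 ≤ (b : ℤ)

/-- A module `P` has finite type if it lies in `Add X` for some finite length module `X`. -/
def HasFiniteType (S : Type) [Ring S] (P : Type) [AddCommGroup P] [Module S P] : Prop :=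
  ∃ X : ModuleCat.{0} S, (IsNoetherian S X ∧ IsArtinian S X) ∧
    ∃ (ι : Type) (s : P →ₗ[S] ⨁ _i : ι, (X : Type)) (r : (⨁ _i : ι, (X : Type)) →ₗ[S] P),
      r.comp s = LinearMap.id

/-- A Prüfer module: a locally nilpotent surjective endomorphism with nonzero
kernel of finite length. -/
def IsPrufer (S : Type) [Ring S] (P : Type) [AddCommGroup P] [Module S P]
    (φ : Module.End S P) : Prop :=
  Function.Surjective φ ∧ (∀ x : P, ∃ n : ℕ, (φ ^ n) x = 0) ∧
    LinearMap.ker φ ≠ ⊥ ∧ IsNoetherian S (LinearMap.ker φ) ∧ IsArtinian S (LinearMap.ker φ)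

/-- The opposite grading on `Rᵐᵒᵖ`. -/
def opGrading (R : Type) [Ring R] (𝒜 : ℤ → AddSubgroup R) : ℤ → AddSubgroup Rᵐᵒᵖ :=
  fun n => (𝒜 n).map (MulOpposite.opAddEquiv : R ≃+ Rᵐᵒᵖ).toAddMonoidHom

/-- The dual of a linear map, as a map of right modules (`Rᵐᵒᵖ`-modules). -/
def dualHom (R : Type) [Ring R] {P Q : Type} [AddCommGroup P] [Module R P]
    [AddCommGroup Q] [Module R Q] (f : P →ₗ[R] Q) :
    (Q →ₗ[R] R) →ₗ[Rᵐᵒᵖ] (P →ₗ[R] R) where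
  toFun φ := φ.comp f
  map_add' φ ψ := LinearMap.ext fun _ => rfl
  map_smul' r φ := LinearMap.ext fun _ => rfl

/-- A pure submodule: every finite system of linear equations with constants in `A`
solvable in `P` is solvable in `A`. -/
def IsPureSubmodule (S : Type) [Ring S] {P : Type} [AddCommGroup P] [Module S P]
    (A : Submodule S P) : Prop :=
  ∀ (k l : ℕ) (c : Matrix (Fin k) (Fin l) S) (a : Fin k → P), (∀ i, a i ∈ A) →
    (∃ x : Fin l → P, ∀ i, ∑ j, c i j • x j = a i) →
    ∃ x : Fin l → P, (∀ j, x j ∈ A) ∧ ∀ i, ∑ j, c i j • x j = a i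

/-- The submodule of the pull-up `pN` generated by the components in negative degrees. -/
def negPart (R : Type) [Ring R] {𝒜 : ℤ → AddSubgroup R} (P : GradedMod R 𝒜) :
    Submodule R P.carrier :=
  Submodule.span R (⋃ i : ℤ, ⋃ _ : i < 0, (P.grading i : Set P.carrier))

/-- The additive subgroup `N·R_{≥k}` (for left modules, `R_{≥k}·N`). -/
def NRge (R : Type) [Ring R] (𝒜 : ℤ → AddSubgroup R)
    (N : Type) [AddCommGroup N] [Module R N] (k : ℕ) : AddSubgroup N :=
  AddSubgroup.closure {x | ∃ j : ℤ, (k : ℤ) ≤ j ∧ ∃ r ∈ 𝒜 j, ∃ m : N, x = r • m}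

/-- The subquotient `N·R_{≥ d+1} / N·R_{≥ d+2}`. -/
def NRgeSubQuot (R : Type) [Ring R] (𝒜 : ℤ → AddSubgroup R)
    (N : Type) [AddCommGroup N] [Module R N] (d : ℕ) : Type :=
  NRge R 𝒜 N (d + 1) ⧸ (NRge R 𝒜 N (d + 2)).addSubgroupOf (NRge R 𝒜 N (d + 1))

instance (R : Type) [Ring R] (𝒜 : ℤ → AddSubgroup R)
    (N : Type) [AddCommGroup N] [Module R N] (d : ℕ) :
    AddCommGroup (NRgeSubQuot R 𝒜 N d) :=
  inferInstanceAs (AddCommGroup (_ ⧸ _))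

/-- An irreducible map between modules. -/
def IsIrreducibleMap (Λ : Type) [Ring Λ] {U V : Type} [AddCommGroup U] [Module Λ U]
    [AddCommGroup V] [Module Λ V] (f : U →ₗ[Λ] V) : Prop :=
  (¬ ∃ g : V →ₗ[Λ] U, g.comp f = LinearMap.id) ∧
  (¬ ∃ g : V →ₗ[Λ] U, f.comp g = LinearMap.id) ∧
  ∀ (W : Type) [AddCommGroup W] [Module Λ W], Module.Finite Λ W →
    ∀ (h : U →ₗ[Λ] W) (g : W →ₗ[Λ] V), g.comp h = f →
      (∃ h' : W →ₗ[Λ] U, h'.comp h = LinearMap.id) ∨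
      (∃ g' : V →ₗ[Λ] W, g.comp g' = LinearMap.id)

set_option synthInstance.maxHeartbeats 1000000 in
set_option maxHeartbeats 1000000 in
/-- if `M` has finite graded length then
`Hom_R(N, qM) ≅ Hom_{Gr-R}(pN, M)`, via `g ↦ (x ↦ ∑ᵢ g(x eᵢ))`. -/
theorem stmt_1 (R : Type) [Ring R] (𝒜 : ℤ → AddSubgroup R) [GradedRing 𝒜]
    (M : GradedMod R 𝒜) (hM : {n : ℤ | M.grading n ≠ ⊥}.Finite)
    (N : Type) [AddCommGroup N] [Module R N]
    (P : GradedMod R 𝒜) (pu : IsPullUp R 𝒜 N P) (f : N →ₗ[R] M.carrier) :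
    ∃! g : GradedHom R P M,
      ∀ x : N, f x = ∑ᶠ i : ℤ, g.toFun (((pu.equiv i).symm x : P.grading i) : P.carrier) := by
  classical
  haveI := M.decomp
  haveI := P.decomp
  -- projection onto degree `n`, as an additive map
  let prj : ℤ → M.carrier →+ M.carrier := fun n =>
    { toFun := fun y => (DirectSum.decompose M.grading y n : M.carrier)
      map_zero' := by simp
      map_add' := fun a b => by
        simp [DirectSum.decompose_add, DirectSum.add_apply] }
  have prj_same : ∀ {n : ℤ} {y : M.carrier}, y ∈ M.grading n → prj n y = y := by
    intro n y hy
    simpa [prj] using DirectSum.decompose_of_mem_same M.grading hy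
  have prj_ne : ∀ {i n : ℤ} {y : M.carrier}, y ∈ M.grading i → i ≠ n → prj n y = 0 := by
    intro i n y hy hne
    simpa [prj] using DirectSum.decompose_of_mem_ne M.grading hy hne
  have prj_mem : ∀ (n : ℤ) (y : M.carrier), prj n y ∈ M.grading n := by
    intro n y; exact (DirectSum.decompose M.grading y n).2
  -- key commutation: homogeneous scalars shift projections
  have keyA : ∀ {j : ℤ} {r : R}, r ∈ 𝒜 j → ∀ (y : M.carrier) (n : ℤ),
      prj (j + n) (r • y) = r • prj n y := by
    intro j r hr y n
    refine DirectSum.Decomposition.inductionOn M.grading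
      (motive := fun y => prj (j + n) (r • y) = r • prj n y) ?_ ?_ ?_ y
    · simp
    · intro i m
      rcases m with ⟨m, hm⟩
      by_cases hin : i = n
      · subst hin
        rw [prj_same (M.smul_mem hr hm), prj_same hm]
      · rw [prj_ne (M.smul_mem hr hm) (by omega), prj_ne hm hin, smul_zero]
    · intro a b ha hb
      rw [smul_add, map_add, ha, hb, map_add, smul_add]
  -- the component maps of the candidate graded morphism
  let h : ∀ n : ℤ, P.grading n →+ M.carrier := fun n =>
    { toFun := fun m => prj n (f (pu.equiv n m))
      map_zero' := by simp
      map_add' := fun a b => by simp only [map_add] }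
  let g0 : P.carrier → M.carrier :=
    fun x => DirectSum.toAddMonoid h (DirectSum.decompose P.grading x)
  have g0add : ∀ a b : P.carrier, g0 (a + b) = g0 a + g0 b := by
    intro a b
    simp only [g0, DirectSum.decompose_add, map_add]
  have g0_hom : ∀ {n : ℤ} (x : P.grading n), g0 (x : P.carrier) = h n x := by
    intro n x
    simp only [g0, DirectSum.decompose_coe, DirectSum.toAddMonoid_of]
  have gsmul : ∀ (r : R) (x : P.carrier), g0 (r • x) = r • g0 x := by
    intro r
    refine DirectSum.Decomposition.inductionOn 𝒜
      (motive := fun r => ∀ x : P.carrier, g0 (r • x) = r • g0 x) ?_ ?_ ?_ r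
    · intro x
      simp only [zero_smul, g0, DirectSum.decompose_zero, map_zero]
    · intro j r x
      rcases r with ⟨r, hr⟩
      refine DirectSum.Decomposition.inductionOn P.grading
        (motive := fun x => g0 (r • x) = r • g0 x) ?_ ?_ ?_ x
      · simp only [smul_zero, g0, DirectSum.decompose_zero, map_zero]
      · intro n m
        rcases m with ⟨m, hm⟩
        have h1 : r • m ∈ P.grading (j + n) := P.smul_mem hr hm
        have e1 : g0 (r • m) = h (j + n) ⟨r • m, h1⟩ :=
          g0_hom (n := j + n) ⟨r • m, h1⟩
        rw [e1, g0_hom (n := n) ⟨m, hm⟩]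
        show prj (j + n) (f (pu.equiv (j + n) ⟨r • m, h1⟩)) = r • prj n (f (pu.equiv n ⟨m, hm⟩))
        rw [pu.compat j n r m hr hm, map_smul, keyA hr]
      · intro a b ha hb
        rw [smul_add, g0add, ha, hb, g0add, smul_add]
    · intro a b ha hb x
      rw [add_smul, g0add, ha, hb, add_smul]
  let gL : P.carrier →ₗ[R] M.carrier :=
    { toFun := g0, map_add' := g0add, map_smul' := gsmul }
  have memg : ∀ (n : ℤ) (x : P.carrier), x ∈ P.grading n → gL x ∈ M.grading n := by
    intro n x hx
    have : gL x = h n ⟨x, hx⟩ := g0_hom (n := n) ⟨x, hx⟩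
    rw [this]
    exact prj_mem n _
  refine ⟨⟨gL, memg⟩, ?_, ?_⟩
  · -- the defining formula
    intro x
    have hterm : ∀ i : ℤ,
        gL (((pu.equiv i).symm x : P.grading i) : P.carrier) = prj i (f x) := by
      intro i
      have := g0_hom (n := i) ((pu.equiv i).symm x)
      rw [show (gL (((pu.equiv i).symm x : P.grading i) : P.carrier) = g0 _) from rfl, this]
      show prj i (f (pu.equiv i ((pu.equiv i).symm x))) = prj i (f x)
      rw [AddEquiv.apply_symm_apply]
    simp only [hterm]
    have hsub : (Function.support fun i => prj i (f x)) ⊆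
        ↑(DirectSum.decompose M.grading (f x)).support := by
      intro i hi
      simp only [Function.mem_support] at hi
      rw [Finset.mem_coe, DFinsupp.mem_support_iff]
      intro h0
      exact hi (by simp [prj, h0])
    rw [finsum_eq_finset_sum_of_support_subset _ hsub]
    exact (DirectSum.sum_support_decompose M.grading (f x)).symm
  · -- uniqueness
    intro g' hg'
    have htf : ∀ z : P.carrier, g'.toFun z = gL z := by
      intro z
      refine DirectSum.Decomposition.inductionOn P.grading
        (motive := fun z => g'.toFun z = gL z) ?_ ?_ ?_ z
      · simp
      · intro n m
        rcases m with ⟨z, hz⟩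
        set y : N := pu.equiv n ⟨z, hz⟩ with hy
        have hfy := hg' y
        set t : ℤ → M.carrier :=
          fun i => g'.toFun (((pu.equiv i).symm y : P.grading i) : P.carrier) with ht
        have hstep : ∀ i, t i ∈ M.grading i := fun i =>
          g'.map_mem i _ ((pu.equiv i).symm y).2
        have hS : (Function.support t) ⊆ ↑(hM.toFinset ∪ {n} : Finset ℤ) := by
          intro i hi
          simp only [Function.mem_support] at hi
          simp only [Finset.coe_union, Set.mem_union, Finset.coe_singleton,
            Set.Finite.coe_toFinset, Set.mem_setOf_eq]
          left
          intro hbot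
          exact hi (by simpa [hbot] using hstep i)
        have hsum : f y = ∑ i ∈ (hM.toFinset ∪ {n} : Finset ℤ), t i := by
          rw [hfy]
          exact finsum_eq_finset_sum_of_support_subset _ hS
        have hproj : prj n (f y) = t n := by
          rw [hsum, map_sum]
          rw [Finset.sum_eq_single n]
          · exact prj_same (hstep n)
          · intro i _ hin
            exact prj_ne (hstep i) hin
          · intro hn
            exact absurd (Finset.mem_union_right _ (Finset.mem_singleton_self n)) hn
        have h1 : t n = g'.toFun z := by
          have hzz : (((pu.equiv n).symm y : P.grading n) : P.carrier) = z := by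
            rw [hy, AddEquiv.symm_apply_apply]
          show g'.toFun (((pu.equiv n).symm y : P.grading n) : P.carrier) = g'.toFun z
          rw [hzz]
        have h2 : gL z = prj n (f y) := by
          have e := g0_hom (n := n) ⟨z, hz⟩
          rw [show gL z = g0 z from rfl, e]
          show prj n (f (pu.equiv n ⟨z, hz⟩)) = prj n (f y)
          rw [hy]
        show g'.toFun z = gL z
        rw [← h1, ← hproj, h2]
      · intro a b ha hb
        rw [map_add, map_add, ha, hb]
    cases g' with
    | mk tf mm =>
      congr 1
      exact LinearMap.ext htf
end

section
/- For any right R-module N, the counit δ_N : qpN → N (given by δ_N(Σ n_i e_i) = Σ n_i) is a right G_R-approximation of N: every homomorphism f : M → N with M a gradable R-module factors through δ_N. -/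
open DirectSum

set_option maxHeartbeats 1000000
set_option synthInstance.maxHeartbeats 400000

/-- the counit `δ_N : qpN → N` is a right approximation by gradable
modules. -/
theorem stmt_2 (R : Type) [Ring R] (𝒜 : ℤ → AddSubgroup R) [GradedRing 𝒜]
    (N : Type) [AddCommGroup N] [Module R N]
    (P : GradedMod R 𝒜) (pu : IsPullUp R 𝒜 N P)
    (δ : P.carrier →ₗ[R] N)
    (hδ : ∀ (n : ℤ) (m : P.carrier) (hm : m ∈ P.grading n), δ m = pu.equiv n ⟨m, hm⟩)
    (G : Type) [AddCommGroup G] [Module R G] (hG : IsGradable R 𝒜 G)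
    (f : G →ₗ[R] N) :
    ∃ h : G →ₗ[R] P.carrier, δ.comp h = f := by

  obtain ⟨ℳ, ⟨hdec⟩, hsmul⟩ := hG
  letI : DirectSum.Decomposition ℳ := hdec
  -- component maps: on degree n, send x to (equiv n)⁻¹ (f x) ∈ P.grading n ⊆ P.carrier
  let g : ∀ n : ℤ, ℳ n →+ P.carrier := fun n =>
    { toFun := fun x => (((pu.equiv n).symm (f (x : G))) : P.carrier)
      map_zero' := by simp
      map_add' := by intro x y; push_cast [map_add]; rfl }
  let h₀ : G →+ P.carrier :=
    (DirectSum.toAddMonoid g).comp (DirectSum.decomposeAddEquiv ℳ).toAddMonoidHom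
  have hhom : ∀ (n : ℤ) (x : G) (hx : x ∈ ℳ n),
      h₀ x = (((pu.equiv n).symm (f x)) : P.carrier) := by
    intro n x hx
    have : (DirectSum.decomposeAddEquiv ℳ) x = DirectSum.of (fun i => ℳ i) n ⟨x, hx⟩ :=
      DirectSum.decompose_of_mem ℳ hx
    simp only [h₀, AddMonoidHom.comp_apply, AddEquiv.coe_toAddMonoidHom, this,
      DirectSum.toAddMonoid_of]
    rfl
  have hmem : ∀ (n : ℤ) (x : G), x ∈ ℳ n → h₀ x ∈ P.grading n := by
    intro n x hx
    rw [hhom n x hx]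
    exact ((pu.equiv n).symm (f x)).2
  have hδh : ∀ (n : ℤ) (x : G) (hx : x ∈ ℳ n), δ (h₀ x) = f x := by
    intro n x hx
    rw [hδ n (h₀ x) (hmem n x hx)]
    have : (⟨h₀ x, hmem n x hx⟩ : P.grading n) = (pu.equiv n).symm (f x) :=
      Subtype.ext (hhom n x hx)
    rw [this, AddEquiv.apply_symm_apply]
  -- R-linearity for homogeneous scalars
  have keyhom : ∀ (i : ℤ) (r : R), r ∈ 𝒜 i → ∀ x : G, h₀ (r • x) = r • h₀ x := by
    intro i r hr x
    induction x using DirectSum.Decomposition.inductionOn ℳ with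
    | zero => simp
    | homogeneous m =>
      rename_i j
      obtain ⟨m, hm⟩ := m
      simp only
      have hrm : r • m ∈ ℳ (i + j) := hsmul hr hm
      rw [hhom (i + j) (r • m) hrm]
      have hPm : r • h₀ m ∈ P.grading (i + j) := P.smul_mem hr (hmem j m hm)
      have : ((pu.equiv (i + j)).symm (f (r • m)) : P.grading (i + j))
          = ⟨r • h₀ m, hPm⟩ := by
        apply (pu.equiv (i + j)).injective
        rw [AddEquiv.apply_symm_apply, map_smul]
        have h1 : (⟨r • h₀ m, hPm⟩ : P.grading (i + j))
            = ⟨r • h₀ m, P.smul_mem hr (hmem j m hm)⟩ := rfl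
        rw [h1, pu.compat i j r (h₀ m) hr (hmem j m hm)]
        have h2 : (⟨h₀ m, hmem j m hm⟩ : P.grading j) = (pu.equiv j).symm (f m) :=
          Subtype.ext (hhom j m hm)
        rw [h2, AddEquiv.apply_symm_apply]
      rw [this]
    | add a b ha hb =>
      rw [smul_add, map_add, ha, hb, map_add, smul_add]
  have key : ∀ (r : R) (x : G), h₀ (r • x) = r • h₀ x := by
    intro r x
    induction r using DirectSum.Decomposition.inductionOn 𝒜 with
    | zero => simp
    | homogeneous m =>
      rename_i i
      obtain ⟨r, hr⟩ := m
      exact keyhom i r hr x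
    | add a b ha hb =>
      rw [add_smul, map_add, ha, hb, add_smul]
  refine ⟨{ toFun := h₀, map_add' := h₀.map_add, map_smul' := key }, ?_⟩
  apply LinearMap.ext
  intro x
  simp only [LinearMap.comp_apply, LinearMap.coe_mk, AddHom.coe_mk]
  induction x using DirectSum.Decomposition.inductionOn ℳ with
  | zero => simp
  | homogeneous m =>
    rename_i n
    obtain ⟨m, hm⟩ := m
    exact hδh n m hm
  | add a b ha hb =>
    rw [map_add, map_add, ha, hb, map_add]
end

section
/- For any graded right R-module M, there is an isomorphism of graded modules pqM ≅ ⊕_{i∈ℤ} M[i], where M[i] denotes the i-th shift of M. Consequently, if N is gradable with N ≅ qM, then pN ≅ ⊕_{i∈ℤ} M[i] and qpN ≅ N^{(ω)} (a countable direct sum of copies of N). -/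
open DirectSum

set_option synthInstance.maxHeartbeats 1000000
set_option maxHeartbeats 1000000
set_option linter.unusedSectionVars false
set_option linter.unnecessarySimpa false

namespace Stmt4Aux

instance (R : Type) [Ring R] {𝒜 : ℤ → AddSubgroup R} (M : GradedMod R 𝒜) :
    DirectSum.Decomposition M.grading := M.decomp

variable (R : Type) [Ring R] (𝒜 : ℤ → AddSubgroup R) [GradedRing 𝒜]

/-- The "rearranging" endomorphism of `⨁ _ : ℤ, M`. -/
def K (M : GradedMod R 𝒜) : (⨁ _ : ℤ, M.carrier) →+ (⨁ _ : ℤ, M.carrier) :=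
  DirectSum.toAddMonoid fun n =>
    (DirectSum.toAddMonoid fun j =>
        (DirectSum.of (fun _ : ℤ => M.carrier) (j - n)).comp (M.grading j).subtype).comp
      (DirectSum.decomposeAddEquiv M.grading).toAddMonoidHom

lemma K_of (M : GradedMod R 𝒜) {n l : ℤ} {m : M.carrier} (hm : m ∈ M.grading l) :
    K R 𝒜 M (DirectSum.of (fun _ : ℤ => M.carrier) n m)
      = DirectSum.of (fun _ : ℤ => M.carrier) (l - n) m := by
  simp [K, DirectSum.toAddMonoid_of, AddEquiv.coe_toAddMonoidHom,
    DirectSum.decomposeAddEquiv_apply, DirectSum.decompose_of_mem M.grading hm]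

lemma K_K (M : GradedMod R 𝒜) (x : ⨁ _ : ℤ, M.carrier) : K R 𝒜 M (K R 𝒜 M x) = x := by
  suffices h : (K R 𝒜 M).comp (K R 𝒜 M) = AddMonoidHom.id _ by
    exact DFunLike.congr_fun h x
  refine DirectSum.addHom_ext fun n m => ?_
  induction m using DirectSum.Decomposition.inductionOn M.grading with
  | zero => simp
  | @homogeneous l m =>
    simp only [AddMonoidHom.coe_comp, Function.comp_apply, AddMonoidHom.id_apply,
      K_of R 𝒜 M m.2, K_of R 𝒜 M (n := l - n) m.2, sub_sub_cancel]
  | add m m' hm hm' =>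
    simp only [map_add, AddMonoidHom.coe_comp, Function.comp_apply, AddMonoidHom.id_apply] at *
    rw [hm, hm']

lemma K_mem (M : GradedMod R 𝒜) (n i : ℤ) (m : M.carrier) :
    (K R 𝒜 M (DirectSum.of (fun _ : ℤ => M.carrier) n m)) i ∈ M.grading (n + i) := by
  induction m using DirectSum.Decomposition.inductionOn M.grading with
  | zero => rw [map_zero, map_zero]; exact zero_mem _
  | @homogeneous l m =>
    rw [K_of R 𝒜 M m.2, DirectSum.of_apply]
    by_cases h : l - n = i
    · subst h
      simpa [show n + (l - n) = l by ring] using m.2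
    · rw [dif_neg h]; exact zero_mem _
  | add m m' hm hm' =>
    rw [map_add, map_add, DirectSum.add_apply]
    exact add_mem hm hm'

lemma of_smul (M : GradedMod R 𝒜) (i : ℤ) (r : R) (m : M.carrier) :
    DirectSum.of (fun _ : ℤ => M.carrier) i (r • m)
      = r • DirectSum.of (fun _ : ℤ => M.carrier) i m := by
  refine DFinsupp.ext fun j => ?_
  rw [DirectSum.smul_apply, DirectSum.of_apply, DirectSum.of_apply]
  by_cases h : i = j
  · subst h; simp
  · simp [h]

lemma K_smul (M : GradedMod R 𝒜) (j n : ℤ) {r : R} (hr : r ∈ 𝒜 j) (m : M.carrier) :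
    K R 𝒜 M (DirectSum.of (fun _ : ℤ => M.carrier) (j + n) (r • m))
      = r • K R 𝒜 M (DirectSum.of (fun _ : ℤ => M.carrier) n m) := by
  induction m using DirectSum.Decomposition.inductionOn M.grading with
  | zero => simp
  | @homogeneous l m =>
    rw [K_of R 𝒜 M m.2, K_of R 𝒜 M (n := j + n) (M.smul_mem hr m.2),
      show j + l - (j + n) = l - n by ring, of_smul]
  | add m m' hm hm' =>
    simp only [smul_add, map_add, hm, hm']

/-- `K` as an additive equivalence. -/
def Kequiv (M : GradedMod R 𝒜) : (⨁ _ : ℤ, M.carrier) ≃+ (⨁ _ : ℤ, M.carrier) where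
  toFun := K R 𝒜 M
  invFun := K R 𝒜 M
  left_inv := K_K R 𝒜 M
  right_inv := K_K R 𝒜 M
  map_add' := map_add _

/-- The componentwise equivalence `⨁ n, P_n ≃+ ⨁ n, M`. -/
def Bhom (M : GradedMod R 𝒜) (P : GradedMod R 𝒜) (pu : IsPullUp R 𝒜 M.carrier P) :
    (⨁ n, P.grading n) →+ (⨁ _ : ℤ, M.carrier) :=
  DirectSum.toAddMonoid fun n =>
    (DirectSum.of (fun _ : ℤ => M.carrier) n).comp (pu.equiv n).toAddMonoidHom

def Bequiv (M : GradedMod R 𝒜) (P : GradedMod R 𝒜) (pu : IsPullUp R 𝒜 M.carrier P) :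
    (⨁ n, P.grading n) ≃+ (⨁ _ : ℤ, M.carrier) where
  toFun := Bhom R 𝒜 M P pu
  invFun := DirectSum.toAddMonoid fun n =>
    (DirectSum.of (fun n => P.grading n) n).comp (pu.equiv n).symm.toAddMonoidHom
  left_inv := by
    intro x
    refine DFunLike.congr_fun (DirectSum.addHom_ext fun n m => ?_)
      (f := (DirectSum.toAddMonoid fun n => (DirectSum.of (fun n => P.grading n) n).comp
        (pu.equiv n).symm.toAddMonoidHom).comp (Bhom R 𝒜 M P pu))
      (g := AddMonoidHom.id _) x
    simp [Bhom, DirectSum.toAddMonoid_of]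
  right_inv := by
    intro x
    refine DFunLike.congr_fun (DirectSum.addHom_ext fun n m => ?_)
      (f := (Bhom R 𝒜 M P pu).comp (DirectSum.toAddMonoid fun n =>
        (DirectSum.of (fun n => P.grading n) n).comp (pu.equiv n).symm.toAddMonoidHom))
      (g := AddMonoidHom.id _) x
    simp [Bhom, DirectSum.toAddMonoid_of]
  map_add' := map_add _

/-- The full additive equivalence `P ≃+ ⨁ i, M`. -/
def e₀ (M : GradedMod R 𝒜) (P : GradedMod R 𝒜) (pu : IsPullUp R 𝒜 M.carrier P) :
    P.carrier ≃+ (⨁ _ : ℤ, M.carrier) :=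
  (DirectSum.decomposeAddEquiv P.grading).trans
    ((Bequiv R 𝒜 M P pu).trans (Kequiv R 𝒜 M))

lemma e₀_of_mem (M : GradedMod R 𝒜) (P : GradedMod R 𝒜) (pu : IsPullUp R 𝒜 M.carrier P)
    {n : ℤ} {x : P.carrier} (hx : x ∈ P.grading n) :
    e₀ R 𝒜 M P pu x
      = K R 𝒜 M (DirectSum.of (fun _ : ℤ => M.carrier) n (pu.equiv n ⟨x, hx⟩)) := by
  simp only [e₀, AddEquiv.trans_apply, DirectSum.decomposeAddEquiv_apply,
    DirectSum.decompose_of_mem P.grading hx]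
  have : Bequiv R 𝒜 M P pu (DirectSum.of (fun n => P.grading n) n ⟨x, hx⟩)
      = DirectSum.of (fun _ : ℤ => M.carrier) n (pu.equiv n ⟨x, hx⟩) := by
    simp [Bequiv, Bhom, DirectSum.toAddMonoid_of]
  rw [this]
  rfl

lemma e₀_smul (M : GradedMod R 𝒜) (P : GradedMod R 𝒜) (pu : IsPullUp R 𝒜 M.carrier P)
    (r : R) (x : P.carrier) :
    e₀ R 𝒜 M P pu (r • x) = r • e₀ R 𝒜 M P pu x := by
  induction x using DirectSum.Decomposition.inductionOn P.grading with
  | zero => simp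
  | @homogeneous n x =>
    induction r using DirectSum.Decomposition.inductionOn 𝒜 with
    | zero => simp
    | @homogeneous j r =>
      have h : (r : R) • (x : P.carrier) ∈ P.grading (j + n) := P.smul_mem r.2 x.2
      rw [e₀_of_mem R 𝒜 M P pu h, e₀_of_mem R 𝒜 M P pu x.2]
      have hc := pu.compat j n r x r.2 x.2
      rw [show (⟨(r : R) • (x : P.carrier), h⟩ : P.grading (j + n))
            = ⟨(r : R) • (x : P.carrier), P.smul_mem r.2 x.2⟩ from rfl, hc,
        K_smul R 𝒜 M j n r.2]
    | add r r' hr hr' =>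
      rw [add_smul, map_add, hr, hr', add_smul]
  | add x x' hx hx' =>
    rw [smul_add, map_add, map_add, smul_add, hx, hx']


theorem pullUpEquiv (M P : GradedMod R 𝒜) (pu : IsPullUp R 𝒜 M.carrier P) :
    ∃ e : P.carrier ≃ₗ[R] DirectSum ℤ (fun _ => M.carrier),
      ∀ (n : ℤ) (x : P.carrier), x ∈ P.grading n → ∀ i : ℤ, e x i ∈ M.grading (n + i) := by
  refine ⟨(e₀ R 𝒜 M P pu).toLinearEquiv (e₀_smul R 𝒜 M P pu), fun n x hx i => ?_⟩
  show (e₀ R 𝒜 M P pu x) i ∈ M.grading (n + i)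
  rw [e₀_of_mem R 𝒜 M P pu hx]
  exact K_mem R 𝒜 M n i _

end Stmt4Aux


/-- `pqM ≅ ⊕_{i∈ℤ} M[i]` as graded modules; consequently, for `N ≅ qM`
gradable, `pN ≅ ⊕_{i∈ℤ} M[i]` and `qpN ≅ N^{(ω)}`. -/
theorem stmt_4 (R : Type) [Ring R] (𝒜 : ℤ → AddSubgroup R) [GradedRing 𝒜]
    (M : GradedMod R 𝒜)
    (P : GradedMod R 𝒜) (pu : IsPullUp R 𝒜 M.carrier P)
    (N : Type) [AddCommGroup N] [Module R N] (eN : N ≃ₗ[R] M.carrier)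
    (P' : GradedMod R 𝒜) (pu' : IsPullUp R 𝒜 N P') :
    (∃ e : P.carrier ≃ₗ[R] DirectSum ℤ (fun _ => M.carrier),
      ∀ (n : ℤ) (x : P.carrier), x ∈ P.grading n → ∀ i : ℤ, e x i ∈ M.grading (n + i)) ∧
    (∃ e : P'.carrier ≃ₗ[R] DirectSum ℤ (fun _ => M.carrier),
      ∀ (n : ℤ) (x : P'.carrier), x ∈ P'.grading n → ∀ i : ℤ, e x i ∈ M.grading (n + i)) ∧
    Nonempty (P'.carrier ≃ₗ[R] DirectSum ℕ (fun _ => N)) := by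
  have h1 := Stmt4Aux.pullUpEquiv R 𝒜 M P pu
  have pu'' : IsPullUp R 𝒜 M.carrier P' :=
    { equiv := fun n => (pu'.equiv n).trans eN.toAddEquiv
      compat := fun j n r m hr hm => by
        simp only [AddEquiv.trans_apply, pu'.compat j n r m hr hm]
        exact map_smul eN r _ }
  have h2 := Stmt4Aux.pullUpEquiv R 𝒜 M P' pu''
  refine ⟨h1, h2, ?_⟩
  obtain ⟨e, -⟩ := h2
  exact ⟨e.trans ((finsuppLEquivDirectSum R M.carrier ℤ).symm.trans
    ((Finsupp.mapRange.linearEquiv eN.symm).trans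
      ((Finsupp.domLCongr Equiv.intEquivNat).trans (finsuppLEquivDirectSum R N ℕ))))⟩
end

section
/- If M and M' are strongly indecomposable graded right R-modules (graded modules whose endomorphism rings in Gr-R are local), then qM ≅ qM' as R-modules if and only if M' ≅ M[i] in Gr-R for some i ∈ ℤ. -/
open DirectSum

attribute [instance] GradedMod.decomp

section Aux

variable {R : Type} [Ring R] {𝒜 : ℤ → AddSubgroup R} [GradedRing 𝒜]

/-- The degree-`n` homogeneous component of an element. -/
noncomputable def GradedMod.hcomp (M : GradedMod R 𝒜) (x : M.carrier) (n : ℤ) : M.carrier :=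
  (DirectSum.decompose M.grading x n : M.carrier)

lemma GradedMod.hcomp_mem (M : GradedMod R 𝒜) (x : M.carrier) (n : ℤ) :
    M.hcomp x n ∈ M.grading n := (DirectSum.decompose M.grading x n).2

lemma GradedMod.hcomp_zero (M : GradedMod R 𝒜) (n : ℤ) : M.hcomp 0 n = 0 := by
  simp [GradedMod.hcomp]

lemma GradedMod.hcomp_add (M : GradedMod R 𝒜) (x y : M.carrier) (n : ℤ) :
    M.hcomp (x + y) n = M.hcomp x n + M.hcomp y n := by
  simp [GradedMod.hcomp, DirectSum.decompose_add]

lemma GradedMod.hcomp_of_mem_same (M : GradedMod R 𝒜) {x : M.carrier} {n : ℤ}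
    (hx : x ∈ M.grading n) : M.hcomp x n = x :=
  DirectSum.decompose_of_mem_same _ hx

lemma GradedMod.hcomp_of_mem_ne (M : GradedMod R 𝒜) {x : M.carrier} {m n : ℤ}
    (hx : x ∈ M.grading m) (h : m ≠ n) : M.hcomp x n = 0 :=
  DirectSum.decompose_of_mem_ne _ hx h

lemma GradedMod.hcomp_smul (M : GradedMod R 𝒜) {r : R} {j : ℤ} (hr : r ∈ 𝒜 j)
    (x : M.carrier) (k : ℤ) : M.hcomp (r • x) (j + k) = r • M.hcomp x k := by
  induction x using DirectSum.Decomposition.inductionOn M.grading with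
  | zero => simp [GradedMod.hcomp_zero]
  | @homogeneous i m =>
    have hm : (m : M.carrier) ∈ M.grading i := m.2
    rcases eq_or_ne i k with rfl | hik
    · rw [M.hcomp_of_mem_same (M.smul_mem hr hm), M.hcomp_of_mem_same hm]
    · rw [M.hcomp_of_mem_ne (M.smul_mem hr hm) (by omega),
        M.hcomp_of_mem_ne hm hik, smul_zero]
  | add x y hx hy =>
    rw [smul_add, GradedMod.hcomp_add, hx, hy, GradedMod.hcomp_add, smul_add]

set_option synthInstance.maxHeartbeats 1000000 in
/-- The degree-`d` component of a linear map between graded modules, as an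
additive map. -/
noncomputable def GradedMod.degCompAux (M M' : GradedMod R 𝒜)
    (f : M.carrier →ₗ[R] M'.carrier) (d : ℤ) : M.carrier →+ M'.carrier :=
  (DirectSum.toAddMonoid fun n =>
    { toFun := fun x : M.grading n => M'.hcomp (f x) (n + d)
      map_zero' := by simp [GradedMod.hcomp_zero]
      map_add' := fun x y => by
        push_cast
        rw [map_add, GradedMod.hcomp_add] }).comp
    (DirectSum.decomposeAddEquiv M.grading).toAddMonoidHom

lemma GradedMod.degCompAux_apply (M M' : GradedMod R 𝒜)
    (f : M.carrier →ₗ[R] M'.carrier) (d : ℤ) {x : M.carrier} {n : ℤ}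
    (hx : x ∈ M.grading n) :
    GradedMod.degCompAux M M' f d x = M'.hcomp (f x) (n + d) := by
  have : (DirectSum.decomposeAddEquiv M.grading) x
      = DirectSum.of (fun i => M.grading i) n ⟨x, hx⟩ := by
    rw [DirectSum.decomposeAddEquiv_apply, DirectSum.decompose_of_mem _ hx]
  simp only [GradedMod.degCompAux, AddMonoidHom.comp_apply, AddEquiv.coe_toAddMonoidHom,
    this, DirectSum.toAddMonoid_of]
  rfl

lemma GradedMod.degCompAux_smul (M M' : GradedMod R 𝒜)
    (f : M.carrier →ₗ[R] M'.carrier) (d : ℤ) (r : R) (x : M.carrier) :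
    GradedMod.degCompAux M M' f d (r • x) = r • GradedMod.degCompAux M M' f d x := by
  induction x using DirectSum.Decomposition.inductionOn M.grading with
  | zero => simp
  | @homogeneous i m =>
    have hm : (m : M.carrier) ∈ M.grading i := m.2
    rw [GradedMod.degCompAux_apply M M' f d hm]
    induction r using DirectSum.Decomposition.inductionOn 𝒜 with
    | zero => simp [GradedMod.hcomp_zero]
    | @homogeneous j s =>
      have hs : (s : R) ∈ 𝒜 j := s.2
      have hsm : (s : R) • (m : M.carrier) ∈ M.grading (j + i) := M.smul_mem hs hm
      rw [GradedMod.degCompAux_apply M M' f d hsm, map_smul]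
      have : j + i + d = j + (i + d) := by omega
      rw [this, M'.hcomp_smul hs]
    | add r₁ r₂ h₁ h₂ =>
      rw [add_smul, map_add, h₁, h₂, add_smul]
  | add x y hx hy =>
    rw [smul_add, map_add, map_add, hx, hy, smul_add]

/-- The degree-`d` component of a linear map between graded modules. -/
noncomputable def GradedMod.degComp (M M' : GradedMod R 𝒜)
    (f : M.carrier →ₗ[R] M'.carrier) (d : ℤ) : M.carrier →ₗ[R] M'.carrier :=
  { toFun := GradedMod.degCompAux M M' f d
    map_add' := map_add _
    map_smul' := fun r x => GradedMod.degCompAux_smul M M' f d r x }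

lemma GradedMod.degComp_apply (M M' : GradedMod R 𝒜)
    (f : M.carrier →ₗ[R] M'.carrier) (d : ℤ) {x : M.carrier} {n : ℤ}
    (hx : x ∈ M.grading n) :
    GradedMod.degComp M M' f d x = M'.hcomp (f x) (n + d) :=
  GradedMod.degCompAux_apply M M' f d hx

lemma GradedMod.degComp_mem (M M' : GradedMod R 𝒜)
    (f : M.carrier →ₗ[R] M'.carrier) (d : ℤ) {x : M.carrier} {n m : ℤ}
    (hx : x ∈ M.grading n) (hnm : n + d = m) :
    GradedMod.degComp M M' f d x ∈ M'.grading m := by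
  rw [GradedMod.degComp_apply M M' f d hx, ← hnm]
  exact M'.hcomp_mem _ _

end Aux

lemma GradedMod.hcomp_sum {R : Type} [Ring R] {𝒜 : ℤ → AddSubgroup R} [GradedRing 𝒜]
    (M : GradedMod R 𝒜) {ι : Type} (s : Finset ι) (v : ι → M.carrier) (n : ℤ) :
    M.hcomp (∑ i ∈ s, v i) n = ∑ i ∈ s, M.hcomp (v i) n := by
  classical
  induction s using Finset.induction with
  | empty => simp [GradedMod.hcomp_zero]
  | insert _ _ h ih => rw [Finset.sum_insert h, Finset.sum_insert h, GradedMod.hcomp_add, ih]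

set_option maxHeartbeats 1000000 in
/-- for strongly indecomposable graded modules `M, M'`,
`qM ≅ qM'` iff `M' ≅ M[i]` in `Gr-R` for some `i`. -/
theorem stmt_5 (R : Type) [Ring R] (𝒜 : ℤ → AddSubgroup R) [GradedRing 𝒜]
    (M M' : GradedMod R 𝒜)
    (hM : IsLocalRing (gradedEnd R M)) (hM' : IsLocalRing (gradedEnd R M')) :
    Nonempty (M.carrier ≃ₗ[R] M'.carrier) ↔
      ∃ (i : ℤ) (e : M.carrier ≃ₗ[R] M'.carrier),
        ∀ (n : ℤ) (x : M.carrier), x ∈ M.grading n → e x ∈ M'.grading (n - i) := by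
  constructor
  · rintro ⟨e⟩
    classical
    haveI := hM
    haveI := hM'
    set A := gradedEnd R M with hA
    set f : M.carrier →ₗ[R] M'.carrier := e.toLinearMap with hfdef
    set g : M'.carrier →ₗ[R] M.carrier := e.symm.toLinearMap with hgdef
    -- M.carrier is nontrivial
    have hntM : Nontrivial M.carrier := by
      by_contra h
      rw [not_nontrivial_iff_subsingleton] at h
      haveI : Subsingleton (Module.End R M.carrier) :=
        ⟨fun a b => LinearMap.ext fun x => Subsingleton.elim _ _⟩
      haveI : Subsingleton A := ⟨fun a b => Subtype.ext (Subsingleton.elim _ _)⟩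
      exact not_subsingleton A ‹_›
    -- a nonzero homogeneous element x₀ of degree n
    obtain ⟨x, hx0⟩ := exists_ne (0 : M.carrier)
    have hxn : ∃ n, M.hcomp x n ≠ 0 := by
      by_contra h
      push_neg at h
      apply hx0
      have hs := DirectSum.sum_support_decompose M.grading x
      rw [← hs]
      exact Finset.sum_eq_zero fun n _ => h n
    obtain ⟨n, hxn0⟩ := hxn
    set x₀ : M.carrier := M.hcomp x n with hx₀def
    have hx₀mem : x₀ ∈ M.grading n := M.hcomp_mem x n
    -- the degree components of f and g and the elements H d of gradedEnd R M
    set fd : ℤ → (M.carrier →ₗ[R] M'.carrier) := fun d => GradedMod.degComp M M' f d with hfd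
    set gd : ℤ → (M'.carrier →ₗ[R] M.carrier) := fun d => GradedMod.degComp M' M g (-d) with hgd
    have hmem : ∀ d, (gd d).comp (fd d) ∈ gradedEnd R M := by
      intro d k y hy
      exact GradedMod.degComp_mem M' M g (-d)
        (GradedMod.degComp_mem M M' f d hy rfl) (by omega)
    set H : ℤ → A := fun d => ⟨(gd d).comp (fd d), hmem d⟩ with hH
    have hHcoe : ∀ d, ((H d : A) : Module.End R M.carrier) = (gd d).comp (fd d) :=
      fun d => rfl
    set S : Finset ℤ :=
      ((DirectSum.decompose M'.grading (f x₀)).support).image (fun m => m - n) with hS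
    -- the key finite sum identity : ∑_{d ∈ S} H d x₀ = x₀
    have h1 : ∀ d, ((H d : A) : Module.End R M.carrier) x₀
        = M.hcomp (g (M'.hcomp (f x₀) (n + d))) n := by
      intro d
      rw [hHcoe d, LinearMap.comp_apply, hfd, hgd]
      rw [GradedMod.degComp_apply M M' f d hx₀mem]
      rw [GradedMod.degComp_apply M' M g (-d) (M'.hcomp_mem (f x₀) (n + d))]
      have h2 : n + d + -d = n := by omega
      rw [h2]
    have hfsum : ∑ d ∈ S, M'.hcomp (f x₀) (n + d) = f x₀ := by
      rw [hS, Finset.sum_image (by intro a _ b _ h; exact sub_left_injective h)]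
      calc ∑ m ∈ (DirectSum.decompose M'.grading (f x₀)).support,
            M'.hcomp (f x₀) (n + (m - n))
          = ∑ m ∈ (DirectSum.decompose M'.grading (f x₀)).support,
            M'.hcomp (f x₀) m :=
            Finset.sum_congr rfl fun m _ => by rw [show n + (m - n) = m by omega]
        _ = f x₀ := DirectSum.sum_support_decompose M'.grading (f x₀)
    have hsum : ∑ d ∈ S, ((H d : A) : Module.End R M.carrier) x₀ = x₀ := by
      calc ∑ d ∈ S, ((H d : A) : Module.End R M.carrier) x₀
          = ∑ d ∈ S, M.hcomp (g (M'.hcomp (f x₀) (n + d))) n :=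
            Finset.sum_congr rfl fun d _ => h1 d
        _ = M.hcomp (∑ d ∈ S, g (M'.hcomp (f x₀) (n + d))) n :=
            (M.hcomp_sum S _ n).symm
        _ = M.hcomp (g (∑ d ∈ S, M'.hcomp (f x₀) (n + d))) n := by rw [map_sum]
        _ = M.hcomp (g (f x₀)) n := by rw [hfsum]
        _ = M.hcomp x₀ n := by rw [hfdef, hgdef]; simp
        _ = x₀ := M.hcomp_of_mem_same hx₀mem
    -- some H d is a unit in gradedEnd R M
    have add_nonunit : ∀ a b : A, ¬ IsUnit a → ¬ IsUnit b → ¬ IsUnit (a + b) := by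
      intro a b ha hb hab
      obtain ⟨w, hw⟩ := hab
      have h1 : a * ↑w⁻¹ + b * ↑w⁻¹ = 1 := by
        rw [← add_mul, ← hw]; exact w.mul_inv
      rcases IsLocalRing.isUnit_or_isUnit_of_add_one h1 with h | h
      · refine ha ?_
        have h2 : a = a * ↑w⁻¹ * ↑w := by rw [mul_assoc, w.inv_mul, mul_one]
        rw [h2]; exact h.mul w.isUnit
      · refine hb ?_
        have h2 : b = b * ↑w⁻¹ * ↑w := by rw [mul_assoc, w.inv_mul, mul_one]
        rw [h2]; exact h.mul w.isUnit
    have hexists : ∃ d ∈ S, IsUnit (H d) := by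
      by_contra hcon
      push_neg at hcon
      have hnu : ¬ IsUnit (∑ d ∈ S, H d) := by
        have key : ∀ s : Finset ℤ, (∀ d ∈ s, ¬ IsUnit (H d)) → ¬ IsUnit (∑ d ∈ s, H d) := by
          intro s
          induction s using Finset.induction with
          | empty =>
            intro _
            rw [Finset.sum_empty]
            exact fun h => zero_ne_one (isUnit_zero_iff.mp h)
          | @insert a s hnm ih =>
            intro hall
            rw [Finset.sum_insert hnm]
            exact add_nonunit _ _ (hall a (Finset.mem_insert_self a s))
              (ih fun d hd => hall d (Finset.mem_insert_of_mem hd))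
        exact key S hcon
      have hu : IsUnit (1 - ∑ d ∈ S, H d) :=
        (IsLocalRing.isUnit_or_isUnit_of_add_one
          (a := ∑ d ∈ S, H d) (b := 1 - ∑ d ∈ S, H d) (by abel)).resolve_left hnu
      have hcoe1 : ((1 - ∑ d ∈ S, H d : A) : Module.End R M.carrier)
          = 1 - ∑ d ∈ S, ((H d : A) : Module.End R M.carrier) := by
        have h := map_sub A.subtype 1 (∑ d ∈ S, H d)
        rw [map_one, map_sum] at h
        simp only [Subring.coe_subtype] at h; exact h
      have happ : ((1 - ∑ d ∈ S, H d : A) : Module.End R M.carrier) x₀ = 0 := by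
        rw [hcoe1, LinearMap.sub_apply, LinearMap.sum_apply, hsum,
          Module.End.one_apply, sub_self]
      obtain ⟨w, hw⟩ := hu
      have hiv : (↑(w⁻¹) * ↑w : A) = 1 := w.inv_mul
      have h5 := congrArg (fun a : A => (a : Module.End R M.carrier) x₀) hiv
      simp only [MulMemClass.coe_mul, Module.End.mul_apply, OneMemClass.coe_one,
        Module.End.one_apply] at h5
      rw [hw, happ, map_zero] at h5
      exact hxn0 h5.symm
    obtain ⟨d, _, hdu⟩ := hexists
    -- k is the inverse of H d in gradedEnd R M
    obtain ⟨k, hk1, hk2⟩ : ∃ k : A, k * H d = 1 ∧ H d * k = 1 := by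
      refine ⟨↑(hdu.unit⁻¹), ?_, ?_⟩
      · have := hdu.unit.inv_mul
        rwa [IsUnit.unit_spec hdu] at this
      · have := hdu.unit.mul_inv
        rwa [IsUnit.unit_spec hdu] at this
    set kE : Module.End R M.carrier := (k : Module.End R M.carrier) with hkE
    have hku : ∀ z : M.carrier, kE ((gd d) ((fd d) z)) = z := by
      intro z
      have h5 := congrArg (fun a : A => (a : Module.End R M.carrier) z) hk1
      simp only [MulMemClass.coe_mul, Module.End.mul_apply, OneMemClass.coe_one,
        Module.End.one_apply, hHcoe d, LinearMap.comp_apply] at h5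
      exact h5
    have huk : ∀ z : M.carrier, (gd d) ((fd d) (kE z)) = z := by
      intro z
      have h5 := congrArg (fun a : A => (a : Module.End R M.carrier) z) hk2
      simp only [MulMemClass.coe_mul, Module.End.mul_apply, OneMemClass.coe_one,
        Module.End.one_apply, hHcoe d, LinearMap.comp_apply] at h5
      exact h5
    -- the idempotent φ' in gradedEnd R M'
    set φ' : Module.End R M'.carrier := (fd d).comp (kE.comp (gd d)) with hφ'
    have hφ'app : ∀ y, φ' y = (fd d) (kE ((gd d) y)) := fun y => rfl
    have hφ'mem : φ' ∈ gradedEnd R M' := by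
      intro m y hy
      have h5 : (gd d) y ∈ M.grading (m + -d) :=
        GradedMod.degComp_mem M' M g (-d) hy rfl
      have h6 : kE ((gd d) y) ∈ M.grading (m + -d) := k.2 _ _ h5
      rw [hφ'app]
      exact GradedMod.degComp_mem M M' f d h6 (by omega)
    set p : gradedEnd R M' := ⟨φ', hφ'mem⟩ with hp
    have hmul : φ' * φ' = φ' := by
      apply LinearMap.ext
      intro y
      show φ' (φ' y) = φ' y
      rw [hφ'app (φ' y), hφ'app y, huk ((gd d) y)]
    have hpp : p * p = p := Subtype.ext hmul
    have hp01 : p = 0 ∨ p = 1 := by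
      rcases IsLocalRing.isUnit_or_isUnit_of_add_one (a := p) (b := 1 - p) (by abel) with h | h
      · right
        exact h.mul_left_cancel (by rw [hpp, mul_one])
      · left
        have h7 : (1 - p) * p = (1 - p) * 0 := by
          rw [sub_mul, one_mul, hpp, sub_self, mul_zero]
        exact h.mul_left_cancel h7
    -- p = 0 is impossible
    have hpne : p ≠ 0 := by
      intro h0
      have hφ0 : φ' = 0 := congrArg Subtype.val h0
      have hHd0 : H d = 0 := by
        apply Subtype.ext
        apply LinearMap.ext
        intro z
        have h9 : (gd d) (φ' ((fd d) z)) = (gd d) ((fd d) z) := by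
          rw [hφ'app]; exact huk ((gd d) ((fd d) z))
        rw [hφ0] at h9
        simp only [LinearMap.zero_apply, map_zero] at h9
        show ((H d : A) : Module.End R M.carrier) z = ((0 : A) : Module.End R M.carrier) z
        rw [hHcoe d, LinearMap.comp_apply, ← h9]
        rfl
      rw [hHd0] at hdu
      exact zero_ne_one (isUnit_zero_iff.mp hdu)
    have hp1 : p = 1 := hp01.resolve_left hpne
    have hfg : (fd d).comp (kE.comp (gd d)) = LinearMap.id := by
      have h10 : φ' = (1 : Module.End R M'.carrier) := congrArg Subtype.val hp1
      rw [← hφ', h10, Module.End.one_eq_id]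
    have hgf : (kE.comp (gd d)).comp (fd d) = LinearMap.id := by
      apply LinearMap.ext
      intro z
      exact hku z
    refine ⟨-d, LinearEquiv.ofLinear (fd d) (kE.comp (gd d)) hfg hgf, ?_⟩
    intro m y hy
    rw [LinearEquiv.ofLinear_apply]
    exact GradedMod.degComp_mem M M' f d hy (by omega)
  · rintro ⟨i, e, _⟩
    exact ⟨e⟩
end

section
/- Let N be a right R-module and M a locally finite graded right R-module of finite graded length. If there exists a split epimorphism g : pN → M in Gr-R, then qM lies in add(N), i.e., qM is a direct summand of a finite direct sum of copies of N. -/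
open DirectSum

set_option synthInstance.maxHeartbeats 1000000
set_option maxHeartbeats 2000000
set_option linter.unusedSectionVars false
set_option linter.unusedVariables false

section Aux

variable {R : Type} [Ring R] {𝒜 : ℤ → AddSubgroup R}
variable {N : Type} [AddCommGroup N] [Module R N]
variable {P : GradedMod R 𝒜}

/-- Inclusion of `N` into the degree-`n` component of the pull-up `P`. -/
def IsPullUp.iota (pu : IsPullUp R 𝒜 N P) (n : ℤ) (y : N) : P.carrier :=
  ((pu.equiv n).symm y : P.carrier)

namespace IsPullUp

variable (pu : IsPullUp R 𝒜 N P)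

lemma iota_mem (n : ℤ) (y : N) : pu.iota n y ∈ P.grading n :=
  ((pu.equiv n).symm y).2

lemma iota_zero (n : ℤ) : pu.iota n 0 = 0 := by
  simp [iota]

lemma iota_add (n : ℤ) (y z : N) :
    pu.iota n (y + z) = pu.iota n y + pu.iota n z := by
  simp [iota]

lemma iota_equiv (n : ℤ) (z : P.carrier) (hz : z ∈ P.grading n) :
    pu.iota n (pu.equiv n ⟨z, hz⟩) = z := by
  simp [iota]

lemma smul_iota {i : ℤ} {r : R} (hr : r ∈ 𝒜 i) (n : ℤ) (y : N) :
    r • pu.iota n y = pu.iota (i + n) (r • y) := by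
  have hm : pu.iota n y ∈ P.grading n := pu.iota_mem n y
  have h := pu.compat i n r (pu.iota n y) hr hm
  have h2 : pu.equiv n ⟨pu.iota n y, hm⟩ = y := by
    have : (⟨pu.iota n y, hm⟩ : P.grading n) = (pu.equiv n).symm y := rfl
    rw [this, AddEquiv.apply_symm_apply]
  rw [h2] at h
  have h3 := congrArg (fun t => ((((pu.equiv (i + n)).symm t : P.grading (i + n))) : P.carrier)) h
  simpa [iota, AddEquiv.symm_apply_apply] using h3

/-- The codiagonal map `pN → N`, summing the components. -/
def piN : P.carrier →+ N :=
  letI := P.decomp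
  (DirectSum.toAddMonoid fun n => (pu.equiv n).toAddMonoidHom).comp
    (DirectSum.decomposeAddEquiv P.grading).toAddMonoidHom

lemma piN_of_mem {n : ℤ} {z : P.carrier} (hz : z ∈ P.grading n) :
    pu.piN z = pu.equiv n ⟨z, hz⟩ := by
  letI := P.decomp
  show (DirectSum.toAddMonoid fun n => (pu.equiv n).toAddMonoidHom)
      ((DirectSum.decomposeAddEquiv P.grading) z) = _
  rw [DirectSum.decomposeAddEquiv_apply, DirectSum.decompose_of_mem P.grading hz,
    DirectSum.toAddMonoid_of]
  rfl

/-- The degree-`c` shift endomorphism of the pull-up. -/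
def mu (c : ℤ) : P.carrier →+ P.carrier :=
  letI := P.decomp
  (DirectSum.toAddMonoid fun n =>
    ((P.grading (n - c)).subtype.comp
      (((pu.equiv (n - c)).symm.toAddMonoidHom).comp (pu.equiv n).toAddMonoidHom))).comp
    (DirectSum.decomposeAddEquiv P.grading).toAddMonoidHom

lemma mu_of_mem (c : ℤ) {n : ℤ} {z : P.carrier} (hz : z ∈ P.grading n) :
    pu.mu c z = pu.iota (n - c) (pu.equiv n ⟨z, hz⟩) := by
  letI := P.decomp
  show (DirectSum.toAddMonoid fun n =>
      ((P.grading (n - c)).subtype.comp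
        (((pu.equiv (n - c)).symm.toAddMonoidHom).comp (pu.equiv n).toAddMonoidHom)))
      ((DirectSum.decomposeAddEquiv P.grading) z) = _
  rw [DirectSum.decomposeAddEquiv_apply, DirectSum.decompose_of_mem P.grading hz,
    DirectSum.toAddMonoid_of]
  rfl

end IsPullUp

variable [GradedRing 𝒜]

/-- extend a homogeneous smul-compatibility to all of `R`, all of `A`. -/
lemma homog_smul_ext {A B : Type} [AddCommGroup A] [Module R A] [AddCommGroup B] [Module R B]
    (ℳ : ℤ → AddSubgroup A) (dec : DirectSum.Decomposition ℳ) (f : A →+ B)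
    (h : ∀ (i : ℤ) (r : R), r ∈ 𝒜 i → ∀ (n : ℤ) (z : A), z ∈ ℳ n → f (r • z) = r • f z) :
    ∀ (r : R) (z : A), f (r • z) = r • f z := by
  letI := dec
  refine DirectSum.Decomposition.inductionOn 𝒜
    (motive := fun r => ∀ z : A, f (r • z) = r • f z) ?_ ?_ ?_
  · intro z; simp
  · intro i r z
    refine DirectSum.Decomposition.inductionOn ℳ
      (motive := fun z => f ((r : R) • z) = (r : R) • f z) ?_ ?_ ?_ z
    · simp
    · intro n w
      exact h i r r.2 n w w.2
    · intro a b ha hb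
      rw [smul_add, map_add, map_add, ha, hb, smul_add]
  · intro a b ha hb z
    rw [add_smul, map_add, ha, hb, add_smul]

namespace IsPullUp

variable (pu : IsPullUp R 𝒜 N P)

/-- `piN` as an `R`-linear map. -/
def piNL : P.carrier →ₗ[R] N where
  toFun := pu.piN
  map_add' := pu.piN.map_add
  map_smul' := by
    intro r z
    refine homog_smul_ext (𝒜 := 𝒜) P.grading P.decomp pu.piN ?_ r z
    intro i r hr n z hz
    rw [pu.piN_of_mem (P.smul_mem hr hz), pu.piN_of_mem hz, pu.compat i n r z hr hz]

/-- `mu` as an `R`-linear map. -/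
def muL (c : ℤ) : P.carrier →ₗ[R] P.carrier where
  toFun := pu.mu c
  map_add' := (pu.mu c).map_add
  map_smul' := by
    intro r z
    refine homog_smul_ext (𝒜 := 𝒜) P.grading P.decomp (pu.mu c) ?_ r z
    intro i r hr n z hz
    rw [pu.mu_of_mem c (P.smul_mem hr hz), pu.mu_of_mem c hz,
      pu.compat i n r z hr hz, pu.smul_iota hr,
      show i + (n - c) = i + n - c by ring]

@[simp] lemma muL_apply (c : ℤ) (z : P.carrier) : pu.muL c z = pu.mu c z := rfl
@[simp] lemma piNL_apply (z : P.carrier) : pu.piNL z = pu.piN z := rfl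

end IsPullUp

end Aux


section Fact

variable {R N MM : Type} [Ring R] [AddCommGroup N] [Module R N]
  [AddCommGroup MM] [Module R MM]

/-- `t` factors through a finite direct sum of copies of `N`. -/
def FactorsThru (R N : Type) [Ring R] [AddCommGroup N] [Module R N]
    {MM : Type} [AddCommGroup MM] [Module R MM] (t : Module.End R MM) : Prop :=
  ∃ (k : ℕ) (ii : MM →ₗ[R] (Fin k → N)) (pp : (Fin k → N) →ₗ[R] MM), pp.comp ii = t

lemma factorsThru_zero : FactorsThru R N (0 : Module.End R MM) :=
  ⟨0, 0, 0, by ext x; simp⟩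

lemma FactorsThru.lmul {t : Module.End R MM} (h : FactorsThru R N t) (e : Module.End R MM) :
    FactorsThru R N (e * t) := by
  obtain ⟨k, ii, pp, hf⟩ := h
  exact ⟨k, ii, e ∘ₗ pp, by rw [LinearMap.comp_assoc, hf]; rfl⟩

lemma FactorsThru.rmul {t : Module.End R MM} (h : FactorsThru R N t) (e : Module.End R MM) :
    FactorsThru R N (t * e) := by
  obtain ⟨k, ii, pp, hf⟩ := h
  exact ⟨k, ii ∘ₗ e, pp, by rw [← LinearMap.comp_assoc, hf]; rfl⟩

lemma FactorsThru.neg {t : Module.End R MM} (h : FactorsThru R N t) :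
    FactorsThru R N (-t) := by
  obtain ⟨k, ii, pp, hf⟩ := h
  exact ⟨k, ii, -pp, by rw [LinearMap.neg_comp, hf]⟩

lemma FactorsThru.add {t₁ t₂ : Module.End R MM} (h₁ : FactorsThru R N t₁)
    (h₂ : FactorsThru R N t₂) : FactorsThru R N (t₁ + t₂) := by
  obtain ⟨k₁, i₁, p₁, hf₁⟩ := h₁
  obtain ⟨k₂, i₂, p₂, hf₂⟩ := h₂
  refine ⟨k₁ + k₂,
    LinearMap.pi (fun j => Fin.addCases (motive := fun _ => MM →ₗ[R] N)
      (fun j₁ => (LinearMap.proj j₁) ∘ₗ i₁) (fun j₂ => (LinearMap.proj j₂) ∘ₗ i₂) j),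
    p₁ ∘ₗ (LinearMap.pi fun j₁ => LinearMap.proj (Fin.castAdd k₂ j₁)) +
      p₂ ∘ₗ (LinearMap.pi fun j₂ => LinearMap.proj (Fin.natAdd k₁ j₂)), ?_⟩
  ext x
  have e₁ : ∀ j₁ : Fin k₁,
      (Fin.addCases (motive := fun _ => MM →ₗ[R] N)
        (fun j₁ => (LinearMap.proj j₁) ∘ₗ i₁) (fun j₂ => (LinearMap.proj j₂) ∘ₗ i₂)
        (Fin.castAdd k₂ j₁)) x = i₁ x j₁ := by
    intro j₁; rw [Fin.addCases_left]; rfl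
  have e₂ : ∀ j₂ : Fin k₂,
      (Fin.addCases (motive := fun _ => MM →ₗ[R] N)
        (fun j₁ => (LinearMap.proj j₁) ∘ₗ i₁) (fun j₂ => (LinearMap.proj j₂) ∘ₗ i₂)
        (Fin.natAdd k₁ j₂)) x = i₂ x j₂ := by
    intro j₂; rw [Fin.addCases_right]; rfl
  simp only [LinearMap.comp_apply, LinearMap.add_apply]
  have h1 : (LinearMap.pi fun j₁ : Fin k₁ => LinearMap.proj (R := R) (φ := fun _ : Fin (k₁+k₂) => N) (Fin.castAdd k₂ j₁))
      ((LinearMap.pi (fun j => Fin.addCases (motive := fun _ => MM →ₗ[R] N)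
        (fun j₁ => (LinearMap.proj j₁) ∘ₗ i₁) (fun j₂ => (LinearMap.proj j₂) ∘ₗ i₂) j)) x) = i₁ x := by
    funext j₁
    simp only [LinearMap.pi_apply, LinearMap.proj_apply]
    exact e₁ j₁
  have h2 : (LinearMap.pi fun j₂ : Fin k₂ => LinearMap.proj (R := R) (φ := fun _ : Fin (k₁+k₂) => N) (Fin.natAdd k₁ j₂))
      ((LinearMap.pi (fun j => Fin.addCases (motive := fun _ => MM →ₗ[R] N)
        (fun j₁ => (LinearMap.proj j₁) ∘ₗ i₁) (fun j₂ => (LinearMap.proj j₂) ∘ₗ i₂) j)) x) = i₂ x := by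
    funext j₂
    simp only [LinearMap.pi_apply, LinearMap.proj_apply]
    exact e₂ j₂
  rw [h1, h2, ← LinearMap.comp_apply p₁, hf₁, ← LinearMap.comp_apply p₂, hf₂]

lemma FactorsThru.sub {t₁ t₂ : Module.End R MM} (h₁ : FactorsThru R N t₁)
    (h₂ : FactorsThru R N t₂) : FactorsThru R N (t₁ - t₂) := by
  rw [sub_eq_add_neg]; exact h₁.add h₂.neg

lemma factorsThru_pow_sub (a p : Module.End R MM) (ha : FactorsThru R N a) :
    ∀ j : ℕ, FactorsThru R N ((a - p) ^ j - (-p) ^ j) := by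
  intro j
  induction j with
  | zero => simpa using factorsThru_zero
  | succ k ih =>
    have key : (a - p) ^ (k + 1) - (-p) ^ (k + 1)
        = (a - p) ^ k * a - ((a - p) ^ k - (-p) ^ k) * p := by
      rw [pow_succ, pow_succ]
      noncomm_ring
    rw [key]
    exact (ha.lmul _).sub (ih.rmul _)

end Fact

section RingLemmas

variable {A : Type} [Ring A]

lemma one_sub_mul_geom (x : A) (m : ℕ) :
    (1 - x) * ∑ i ∈ Finset.range m, x ^ i = 1 - x ^ m := by
  induction m with
  | zero => simp
  | succ k ih =>
    rw [Finset.sum_range_succ, mul_add, ih, pow_succ']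
    noncomm_ring

lemma geom_mul_one_sub (x : A) (m : ℕ) :
    (∑ i ∈ Finset.range m, x ^ i) * (1 - x) = 1 - x ^ m := by
  induction m with
  | zero => simp
  | succ k ih =>
    rw [Finset.sum_range_succ, add_mul, ih, pow_succ]
    noncomm_ring

lemma pow_mul_pow_eq_one' (b u : A) (hbu : b * u = 1) : ∀ m : ℕ, b ^ m * u ^ m = 1 := by
  intro m
  induction m with
  | zero => simp
  | succ k ih =>
    rw [pow_succ b, pow_succ' u, mul_assoc, ← mul_assoc b u, hbu, one_mul, ih]

end RingLemmas


/-- if `M` is a locally finite graded module of finite graded length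
and `pN → M` is a split epimorphism in `Gr-R`, then `qM ∈ add N`. -/
theorem stmt_6 (R : Type) [Ring R] (𝒜 : ℤ → AddSubgroup R) [GradedRing 𝒜]
    (N : Type) [AddCommGroup N] [Module R N]
    (M : GradedMod R 𝒜)
    (hlf : ∀ n : ℤ, IsNoetherian (degZero R 𝒜) (M.grading n) ∧
      IsArtinian (degZero R 𝒜) (M.grading n))
    (hfin : {n : ℤ | M.grading n ≠ ⊥}.Finite)
    (P : GradedMod R 𝒜) (pu : IsPullUp R 𝒜 N P)
    (g : GradedHom R P M) (s : GradedHom R M P)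
    (hs : ∀ x : M.carrier, g.toFun (s.toFun x) = x) :
    ∃ (k : ℕ) (ii : M.carrier →ₗ[R] (Fin k → N)) (pp : (Fin k → N) →ₗ[R] M.carrier),
      pp.comp ii = LinearMap.id := by
  classical
  letI := M.decomp
  set S : Finset ℤ := hfin.toFinset with hS_def
  have hSmem : ∀ {n : ℤ}, n ∈ S ↔ M.grading n ≠ ⊥ := fun {n} => hfin.mem_toFinset
  by_cases hS : S.Nonempty
  case neg =>
    have hbot : ∀ n, M.grading n = ⊥ := by
      intro n; by_contra h
      exact hS ⟨n, hSmem.mpr h⟩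
    have hzero : ∀ x : M.carrier, x = 0 := by
      intro x
      refine DirectSum.Decomposition.inductionOn M.grading
        (motive := fun y => y = (0 : M.carrier)) rfl ?_ ?_ x
      · intro n mm
        exact (AddSubgroup.eq_bot_iff_forall _).mp (hbot n) _ mm.2
      · intro a b ha hb; rw [ha, hb, add_zero]
    exact ⟨0, 0, 0, by ext x; rw [LinearMap.id_apply, hzero x]; simp⟩
  case pos =>
  -- the split-mono/epi pair through one copy of `N`
  set uL : M.carrier →ₗ[R] N := pu.piNL ∘ₗ s.toFun with huL_def
  have hgio : ∀ (mm : ℤ) (y : N), mm ∉ S → g.toFun (pu.iota mm y) = 0 := by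
    intro mm y hmm
    have h1 := g.map_mem mm _ (pu.iota_mem mm y)
    have h2 : M.grading mm = ⊥ := by
      by_contra h; exact hmm (hSmem.mpr h)
    rw [h2] at h1; simpa using h1
  have hvsmul : ∀ (r : R) (y : N),
      (∑ n ∈ S, g.toFun (pu.iota n (r • y))) = r • ∑ n ∈ S, g.toFun (pu.iota n y) := by
    refine DirectSum.Decomposition.inductionOn 𝒜
      (motive := fun r => ∀ y, (∑ n ∈ S, g.toFun (pu.iota n (r • y)))
        = r • ∑ n ∈ S, g.toFun (pu.iota n y)) ?_ ?_ ?_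
    · intro y
      simp [pu.iota_zero]
    · intro i r y
      have hr := r.2
      have hz2 : ∀ mm : ℤ, mm - i ∉ S → g.toFun (pu.iota mm ((r : R) • y)) = 0 := by
        intro mm hmm
        have hi : pu.iota mm ((r : R) • y) = (r : R) • pu.iota (mm - i) y := by
          rw [pu.smul_iota hr, show i + (mm - i) = mm by ring]
        rw [hi, map_smul, hgio _ _ hmm, smul_zero]
      have step1 : (r : R) • ∑ n ∈ S, g.toFun (pu.iota n y)
          = ∑ n ∈ S, g.toFun (pu.iota (i + n) ((r : R) • y)) := by
        rw [Finset.smul_sum]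
        refine Finset.sum_congr rfl ?_
        intro n _
        rw [← map_smul, ← pu.smul_iota hr]
      have step2 : ∑ n ∈ S, g.toFun (pu.iota (i + n) ((r : R) • y))
          = ∑ mm ∈ S.image (fun n => i + n), g.toFun (pu.iota mm ((r : R) • y)) := by
        rw [Finset.sum_image (by intro p1 _ p2 _ h; beta_reduce at h; omega)]
      have hsub1 : ∑ mm ∈ S, g.toFun (pu.iota mm ((r : R) • y))
          = ∑ mm ∈ S ∪ S.image (fun n => i + n), g.toFun (pu.iota mm ((r : R) • y)) :=
        Finset.sum_subset Finset.subset_union_left (fun mm _ hmm => hgio mm ((r : R) • y) hmm)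
      have hsub2 : ∑ mm ∈ S.image (fun n => i + n), g.toFun (pu.iota mm ((r : R) • y))
          = ∑ mm ∈ S ∪ S.image (fun n => i + n), g.toFun (pu.iota mm ((r : R) • y)) := by
        refine Finset.sum_subset Finset.subset_union_right ?_
        intro mm _ hmm
        refine hz2 mm ?_
        intro hc
        exact hmm (Finset.mem_image.mpr ⟨mm - i, hc, by ring⟩)
      rw [hsub1, step1, step2, hsub2]
    · intro a b ha hb y
      have h1 : ∀ n, pu.iota n ((a + b) • y) = pu.iota n (a • y) + pu.iota n (b • y) := by
        intro n; rw [add_smul, pu.iota_add]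
      calc ∑ n ∈ S, g.toFun (pu.iota n ((a + b) • y))
          = ∑ n ∈ S, (g.toFun (pu.iota n (a • y)) + g.toFun (pu.iota n (b • y))) := by
            refine Finset.sum_congr rfl ?_
            intro n _; rw [h1, map_add]
        _ = (∑ n ∈ S, g.toFun (pu.iota n (a • y))) + ∑ n ∈ S, g.toFun (pu.iota n (b • y)) :=
            Finset.sum_add_distrib
        _ = (a + b) • ∑ n ∈ S, g.toFun (pu.iota n y) := by rw [ha, hb, add_smul]
  set vL : N →ₗ[R] M.carrier :=
    { toFun := fun y => ∑ n ∈ S, g.toFun (pu.iota n y)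
      map_add' := by
        intro y z
        rw [← Finset.sum_add_distrib]
        refine Finset.sum_congr rfl ?_
        intro n _; rw [pu.iota_add, map_add]
      map_smul' := fun r y => hvsmul r y } with hvL_def
  have hvL_apply : ∀ y : N, vL y = ∑ n ∈ S, g.toFun (pu.iota n y) := fun y => rfl
  set theta : ℤ → Module.End R M.carrier :=
    (fun c => g.toFun ∘ₗ (pu.muL c) ∘ₗ s.toFun) with htheta_def
  have htheta_apply : ∀ (c : ℤ) (x : M.carrier),
      theta c x = g.toFun (pu.mu c (s.toFun x)) := fun c x => rfl
  have htheta_mem : ∀ (c n : ℤ) (x : M.carrier), x ∈ M.grading n →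
      theta c x ∈ M.grading (n - c) := by
    intro c n x hx
    have hsx := s.map_mem n x hx
    rw [htheta_apply, pu.mu_of_mem c hsx]
    exact g.map_mem _ _ (pu.iota_mem _ _)
  have htheta0 : theta 0 = 1 := by
    refine LinearMap.ext fun x => ?_
    refine DirectSum.Decomposition.inductionOn M.grading
      (motive := fun x => theta 0 x = (1 : Module.End R M.carrier) x) ?_ ?_ ?_ x
    · simp
    · intro n mm
      have hsx := s.map_mem n mm mm.2
      rw [htheta_apply, pu.mu_of_mem 0 hsx, Module.End.one_apply]
      rw [show (n : ℤ) - 0 = n by ring, pu.iota_equiv, hs]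
    · intro x y hx hy
      rw [map_add, map_add, hx, hy]
  set C : Finset ℤ := Finset.image₂ (fun p1 p2 => p1 - p2) S S with hC_def
  set a : Module.End R M.carrier := ∑ c ∈ C, theta c with ha_def
  have ha_sum : ∀ x : M.carrier, vL (uL x) = a x := by
    intro x
    refine DirectSum.Decomposition.inductionOn M.grading
      (motive := fun x => vL (uL x) = a x) ?_ ?_ ?_ x
    · simp
    · intro n mm
      set x : M.carrier := (mm : M.carrier) with hx_def
      have hx : x ∈ M.grading n := mm.2
      by_cases hn : M.grading n = ⊥
      · have hx0 : x = 0 := (AddSubgroup.eq_bot_iff_forall _).mp hn _ hx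
        rw [hx0]
        simp
      · have hnS : n ∈ S := hSmem.mpr hn
        have hsx := s.map_mem n x hx
        have hu : uL x = pu.equiv n ⟨s.toFun x, hsx⟩ := by
          rw [huL_def]
          show pu.piNL (s.toFun x) = _
          rw [pu.piNL_apply, pu.piN_of_mem hsx]
        have hax : a x = ∑ c ∈ C, theta c x := by
          rw [ha_def, LinearMap.sum_apply]
        have hth : ∀ c, theta c x
            = g.toFun (pu.iota (n - c) (pu.equiv n ⟨s.toFun x, hsx⟩)) := by
          intro c
          rw [htheta_apply, pu.mu_of_mem c hsx]
        have himg : ∑ c ∈ C, theta c x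
            = ∑ mm ∈ C.image (fun c => n - c),
                g.toFun (pu.iota mm (pu.equiv n ⟨s.toFun x, hsx⟩)) := by
          rw [Finset.sum_image (by intro p1 _ p2 _ h; beta_reduce at h; omega)]
          exact Finset.sum_congr rfl (fun c _ => hth c)
        have hsub1 : ∑ mm ∈ S, g.toFun (pu.iota mm (pu.equiv n ⟨s.toFun x, hsx⟩))
            = ∑ mm ∈ S ∪ C.image (fun c => n - c),
                g.toFun (pu.iota mm (pu.equiv n ⟨s.toFun x, hsx⟩)) :=
          Finset.sum_subset Finset.subset_union_left
            (fun mm _ hmm => hgio mm _ hmm)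
        have hsub2 : ∑ mm ∈ C.image (fun c => n - c),
              g.toFun (pu.iota mm (pu.equiv n ⟨s.toFun x, hsx⟩))
            = ∑ mm ∈ S ∪ C.image (fun c => n - c),
                g.toFun (pu.iota mm (pu.equiv n ⟨s.toFun x, hsx⟩)) := by
          refine Finset.sum_subset Finset.subset_union_right ?_
          intro mm hmmU hmm
          exfalso
          have hmmS : mm ∈ S := by
            rcases Finset.mem_union.mp hmmU with h | h
            · exact h
            · exact absurd h hmm
          refine hmm (Finset.mem_image.mpr ⟨n - mm, ?_, by ring⟩)
          exact Finset.mem_image₂.mpr ⟨n, hnS, mm, hmmS, rfl⟩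
        rw [hu, hvL_apply, hax, himg, hsub1, hsub2]
    · intro x y hx hy
      rw [map_add, map_add, map_add, hx, hy]
  have ha_eq : (vL ∘ₗ uL : Module.End R M.carrier) = a :=
    LinearMap.ext fun x => ha_sum x
  -- split a into degree parts
  set Cne : Finset ℤ := C.filter (fun c => ¬ c = 0) with hCne_def
  set pPos : Module.End R M.carrier :=
    ∑ c ∈ Cne.filter (fun c => 0 < c), theta c with hpPos_def
  set nNeg : Module.End R M.carrier :=
    ∑ c ∈ Cne.filter (fun c => ¬ 0 < c), theta c with hnNeg_def
  have h0C : (0 : ℤ) ∈ C := by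
    obtain ⟨n₀, hn₀⟩ := hS
    exact Finset.mem_image₂.mpr ⟨n₀, hn₀, n₀, hn₀, sub_self n₀⟩
  have hsplit : a = 1 + pPos + nNeg := by
    have h1 : ∑ c ∈ C, theta c
        = (∑ c ∈ C.filter (fun c => c = 0), theta c) + ∑ c ∈ Cne, theta c := by
      rw [hCne_def, Finset.sum_filter_add_sum_filter_not]
    have h2 : C.filter (fun c => c = 0) = {0} := by
      rw [Finset.filter_eq', if_pos h0C]
    have h3 : ∑ c ∈ Cne, theta c = pPos + nNeg := by
      rw [hpPos_def, hnNeg_def, Finset.sum_filter_add_sum_filter_not]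
    rw [ha_def, h1, h2, Finset.sum_singleton, h3, htheta0, add_assoc]
  -- bounds
  set lo : ℤ := S.min' hS with hlo_def
  set hi : ℤ := S.max' hS with hhi_def
  have hlohi : lo ≤ hi := by
    obtain ⟨n₀, hn₀⟩ := hS
    exact le_trans (S.min'_le n₀ hn₀) (S.le_max' n₀ hn₀)
  set m : ℕ := (hi + 1 - lo).toNat with hm_def
  have hm : (m : ℤ) = hi + 1 - lo := Int.toNat_of_nonneg (by omega)
  -- nilpotency of pPos
  set Qle : ℤ → AddSubgroup M.carrier :=
    (fun t => ⨆ p : {n : ℤ // n ≤ t}, M.grading p.1) with hQle_def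
  have hQle_mem : ∀ {n t : ℤ}, n ≤ t → M.grading n ≤ Qle t := by
    intro n t h
    exact le_iSup (fun p : {n : ℤ // n ≤ t} => M.grading p.1) ⟨n, h⟩
  have hQle_step : ∀ (t : ℤ) (x : M.carrier), x ∈ Qle t → pPos x ∈ Qle (t - 1) := by
    intro t x hx
    refine AddSubgroup.iSup_induction _ (C := fun x => pPos x ∈ Qle (t - 1)) hx ?_ ?_ ?_
    · rintro ⟨n', hn'⟩ x hxg
      rw [hpPos_def, LinearMap.sum_apply]
      refine AddSubgroup.sum_mem _ ?_
      intro c hc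
      have hcpos : 0 < c := (Finset.mem_filter.mp hc).2
      exact hQle_mem (by omega) (htheta_mem c n' x hxg)
    · simp only [map_zero]; exact zero_mem _
    · intro x y hx hy; rw [map_add]; exact add_mem hx hy
  have hQle_pow : ∀ (j : ℕ) (t : ℤ) (x : M.carrier),
      x ∈ Qle t → (pPos ^ j) x ∈ Qle (t - j) := by
    intro j
    induction j with
    | zero => intro t x hx; simpa using hx
    | succ k ih =>
      intro t x hx
      have h1 : (pPos ^ (k + 1)) x = (pPos ^ k) (pPos x) := by
        rw [pow_succ, Module.End.mul_apply]
      have h2 := ih (t - 1) (pPos x) (hQle_step t x hx)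
      have harith : t - ((k : ℕ) + 1 : ℕ) = t - 1 - (k : ℤ) := by push_cast; ring
      rw [h1, harith]
      exact h2
  have htopQ : ∀ x : M.carrier, x ∈ Qle hi := by
    intro x
    refine DirectSum.Decomposition.inductionOn M.grading
      (motive := fun x => x ∈ Qle hi) (zero_mem _) ?_ (fun p1 p2 h1 h2 => add_mem h1 h2) x
    intro n mm
    by_cases hn : M.grading n = ⊥
    · have hx0 : (mm : M.carrier) = 0 := (AddSubgroup.eq_bot_iff_forall _).mp hn _ mm.2
      rw [hx0]; exact zero_mem _
    · exact hQle_mem (S.le_max' n (hSmem.mpr hn)) mm.2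
  have hbotQ : ∀ x ∈ Qle (lo - 1), x = 0 := by
    intro x hx
    refine AddSubgroup.iSup_induction _ (C := fun y => y = (0 : M.carrier)) hx ?_ rfl
      (fun p1 p2 h1 h2 => by rw [h1, h2, add_zero])
    rintro ⟨n', hn'⟩ x hxg
    have hb : M.grading n' = ⊥ := by
      by_contra h
      have := S.min'_le n' (hSmem.mpr h); omega
    exact (AddSubgroup.eq_bot_iff_forall _).mp hb _ hxg
  have hpPos_nilp : pPos ^ m = 0 := by
    refine LinearMap.ext fun x => ?_
    have h1 := hQle_pow m hi x (htopQ x)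
    have h2 : hi - (m : ℤ) = lo - 1 := by omega
    rw [h2] at h1
    rw [LinearMap.zero_apply]
    exact hbotQ _ h1
  -- nilpotency of nNeg
  set Qge : ℤ → AddSubgroup M.carrier :=
    (fun t => ⨆ p : {n : ℤ // t ≤ n}, M.grading p.1) with hQge_def
  have hQge_mem : ∀ {n t : ℤ}, t ≤ n → M.grading n ≤ Qge t := by
    intro n t h
    exact le_iSup (fun p : {n : ℤ // t ≤ n} => M.grading p.1) ⟨n, h⟩
  have hQge_step : ∀ (t : ℤ) (x : M.carrier), x ∈ Qge t → nNeg x ∈ Qge (t + 1) := by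
    intro t x hx
    refine AddSubgroup.iSup_induction _ (C := fun x => nNeg x ∈ Qge (t + 1)) hx ?_ ?_ ?_
    · rintro ⟨n', hn'⟩ x hxg
      rw [hnNeg_def, LinearMap.sum_apply]
      refine AddSubgroup.sum_mem _ ?_
      intro c hc
      have hcne : ¬ c = 0 := (Finset.mem_filter.mp (Finset.mem_filter.mp hc).1).2
      have hcnp : ¬ 0 < c := (Finset.mem_filter.mp hc).2
      exact hQge_mem (by omega) (htheta_mem c n' x hxg)
    · simp only [map_zero]; exact zero_mem _
    · intro x y hx hy; rw [map_add]; exact add_mem hx hy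
  have hQge_pow : ∀ (j : ℕ) (t : ℤ) (x : M.carrier),
      x ∈ Qge t → (nNeg ^ j) x ∈ Qge (t + j) := by
    intro j
    induction j with
    | zero => intro t x hx; simpa using hx
    | succ k ih =>
      intro t x hx
      have h1 : (nNeg ^ (k + 1)) x = (nNeg ^ k) (nNeg x) := by
        rw [pow_succ, Module.End.mul_apply]
      have h2 := ih (t + 1) (nNeg x) (hQge_step t x hx)
      have harith : t + ((k : ℕ) + 1 : ℕ) = t + 1 + (k : ℤ) := by push_cast; ring
      rw [h1, harith]
      exact h2
  have htopQ' : ∀ x : M.carrier, x ∈ Qge lo := by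
    intro x
    refine DirectSum.Decomposition.inductionOn M.grading
      (motive := fun x => x ∈ Qge lo) (zero_mem _) ?_ (fun p1 p2 h1 h2 => add_mem h1 h2) x
    intro n mm
    by_cases hn : M.grading n = ⊥
    · have hx0 : (mm : M.carrier) = 0 := (AddSubgroup.eq_bot_iff_forall _).mp hn _ mm.2
      rw [hx0]; exact zero_mem _
    · exact hQge_mem (S.min'_le n (hSmem.mpr hn)) mm.2
  have hbotQ' : ∀ x ∈ Qge (hi + 1), x = 0 := by
    intro x hx
    refine AddSubgroup.iSup_induction _ (C := fun y => y = (0 : M.carrier)) hx ?_ rfl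
      (fun p1 p2 h1 h2 => by rw [h1, h2, add_zero])
    rintro ⟨n', hn'⟩ x hxg
    have hb : M.grading n' = ⊥ := by
      by_contra h
      have := S.le_max' n' (hSmem.mpr h); omega
    exact (AddSubgroup.eq_bot_iff_forall _).mp hb _ hxg
  have hnNeg_nilp : nNeg ^ m = 0 := by
    refine LinearMap.ext fun x => ?_
    have h1 := hQge_pow m lo x (htopQ' x)
    have h2 : lo + (m : ℤ) = hi + 1 := by omega
    rw [h2] at h1
    rw [LinearMap.zero_apply]
    exact hbotQ' _ h1
  -- invertibility of 1 + nNeg and conclusion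
  set x0 : Module.End R M.carrier := -nNeg with hx0_def
  have hx0m : x0 ^ m = 0 := by
    rw [hx0_def, neg_pow, hnNeg_nilp, mul_zero]
  set b : Module.End R M.carrier := ∑ i ∈ Finset.range m, x0 ^ i with hb_def
  have hbu : b * (1 - x0) = 1 := by
    rw [hb_def, geom_mul_one_sub, hx0m, sub_zero]
  have hu_eq : 1 - x0 = a - pPos := by
    rw [hx0_def, hsplit]; abel
  have hfa : FactorsThru R N a := by
    refine ⟨1, LinearMap.pi (fun _ : Fin 1 => uL), vL ∘ₗ LinearMap.proj 0, ?_⟩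
    refine LinearMap.ext fun x => ?_
    rw [← ha_eq]
    simp [LinearMap.pi_apply]
  have hfu : FactorsThru R N ((a - pPos) ^ m) := by
    have h := factorsThru_pow_sub a pPos hfa m
    have hneg : (-pPos) ^ m = 0 := by rw [neg_pow, hpPos_nilp, mul_zero]
    rwa [hneg, sub_zero] at h
  have hfone : FactorsThru R N (1 : Module.End R M.carrier) := by
    have h := hfu.lmul (b ^ m)
    have hone : b ^ m * (a - pPos) ^ m = 1 := by
      rw [← hu_eq]
      exact pow_mul_pow_eq_one' b (1 - x0) hbu m
    rwa [hone] at h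
  obtain ⟨k, ii, pp, hf⟩ := hfone
  exact ⟨k, ii, pp, hf.trans Module.End.one_eq_id⟩
end

section
/- Let S be a ring and P a countably generated S-module such that every finite tuple of elements of P is contained in a finitely presented pure submodule of P. Then P is pure-projective. -/
open DirectSum

lemma exists_retraction (S : Type) [Ring S] {P : Type} [AddCommGroup P] [Module S P]
    {A B : Submodule S P} (hAB : A ≤ B)
    (hA : Module.FinitePresentation S A) (hpure : IsPureSubmodule S A)
    (hB : Module.FinitePresentation S B) :
    ∃ ρ : B →ₗ[S] A, ∀ x : B, (x : P) ∈ A → ((ρ x : P)) = (x : P) := by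
  classical
  -- the submodule A inside B
  set A' : Submodule S B := Submodule.comap B.subtype A with hA'
  have hmemA' : ∀ x : B, x ∈ A' ↔ (x : P) ∈ A := fun x => Iff.rfl
  haveI : Module.Finite S A := inferInstance
  haveI : Module.Finite S A' :=
    Module.Finite.equiv (Submodule.comapSubtypeEquivOfLe hAB).symm
  have hA'fg : A'.FG := Module.Finite.iff_fg.mp inferInstance
  haveI hQ : Module.FinitePresentation S (B ⧸ A') :=
    Module.finitePresentation_of_surjective A'.mkQ (Submodule.mkQ_surjective A')
      (by rwa [Submodule.ker_mkQ])
  -- a finite presentation of Q := B ⧸ A'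
  obtain ⟨l, π, hπ⟩ := Module.Finite.exists_fin' S (B ⧸ A')
  have hker : (LinearMap.ker π).FG := Module.FinitePresentation.fg_ker π hπ
  obtain ⟨k, y, hy⟩ := Submodule.fg_iff_exists_fin_generating_family.mp hker
  -- lift the generators of Q to B
  have hlift : ∀ j : Fin l, ∃ b : B, A'.mkQ b = π (Pi.single j 1) := fun j =>
    Submodule.mkQ_surjective A' _
  choose b hb using hlift
  -- the matrix of relations and the constants
  set c : Matrix (Fin k) (Fin l) S := fun i j => y i j with hc
  have hsum : ∀ v : Fin l → S, A'.mkQ (∑ j, v j • b j) = π v := by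
    intro v
    rw [map_sum]
    simp_rw [map_smul, hb]
    have h2 : ∀ x, v x • π (Pi.single x 1) = π (Pi.single x (v x)) := by
      intro x
      rw [← map_smul]
      congr 1
      ext j
      simp [Pi.single_apply, mul_ite]
    simp_rw [h2, ← map_sum, Finset.univ_sum_single]
  -- the constants of the system lie in A
  set aB : Fin k → B := fun i => ∑ j, c i j • b j with haB
  have haBA : ∀ i, (aB i : P) ∈ A := by
    intro i
    have hk : A'.mkQ (aB i) = 0 := by
      rw [haB, hsum (y i)]
      have : y i ∈ LinearMap.ker π := hy ▸ Submodule.subset_span ⟨i, rfl⟩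
      exact this
    exact (hmemA' (aB i)).mp ((Submodule.Quotient.mk_eq_zero A').mp hk)
  have hsol : ∃ x : Fin l → P, ∀ i, ∑ j, c i j • x j = (aB i : P) := by
    refine ⟨fun j => (b j : P), fun i => ?_⟩
    simp [haB]
  obtain ⟨x, hxA, hxeq⟩ := hpure k l c (fun i => (aB i : P)) haBA hsol
  set d : Fin l → B := fun j => b j - ⟨x j, hAB (hxA j)⟩ with hd
  set σ : (Fin l → S) →ₗ[S] B :=
    { toFun := fun v => ∑ j, v j • d j,
      map_add' := by intro u v; simp [add_smul, Finset.sum_add_distrib],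
      map_smul' := by intro r v; simp [smul_smul, Finset.smul_sum] } with hσdef
  have hσy : ∀ i, σ (y i) = 0 := by
    intro i
    have hco : ((σ (y i) : B) : P) = 0 := by
      show ((∑ j, y i j • d j : B) : P) = 0
      push_cast [hd]
      have : ∀ j, y i j • ((b j : P) - x j) = y i j • (b j : P) - y i j • x j := by
        intro j; rw [smul_sub]
      simp_rw [this, Finset.sum_sub_distrib]
      have h1 : ∑ j, y i j • (b j : P) = (aB i : P) := by simp [haB, hc]
      have h2 : ∑ j, y i j • x j = (aB i : P) := hxeq i
      rw [h1, h2, sub_self]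
    exact Subtype.coe_injective (by simpa using hco)
  have hkerle : LinearMap.ker π ≤ LinearMap.ker σ := by
    rw [← hy, Submodule.span_le]
    rintro _ ⟨i, rfl⟩
    exact hσy i
  have hmkσ : A'.mkQ ∘ₗ σ = π := by
    apply (Pi.basisFun S (Fin l)).ext
    intro j
    rw [Pi.basisFun_apply]
    show A'.mkQ (σ (Pi.single j 1)) = π (Pi.single j 1)
    have hs1 : σ (Pi.single j 1) = d j := by
      show (∑ j', (Pi.single j 1 : Fin l → S) j' • d j') = d j
      rw [Finset.sum_eq_single j]
      · simp
      · intro j' _ hne; rw [Pi.single_apply]; simp [hne]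
      · intro hj; exact absurd (Finset.mem_univ j) hj
    rw [hs1]
    have hdj : A'.mkQ (d j) = A'.mkQ (b j) := by
      rw [hd]
      have : (⟨x j, hAB (hxA j)⟩ : B) ∈ A' := (hmemA' _).mpr (hxA j)
      have hz : A'.mkQ ⟨x j, hAB (hxA j)⟩ = 0 := (Submodule.Quotient.mk_eq_zero A').mpr this
      rw [map_sub, hz, sub_zero]
    rw [hdj, hb]
  set e := LinearMap.quotKerEquivOfSurjective π hπ with he
  set σbar : (B ⧸ A') →ₗ[S] B :=
    (LinearMap.ker π).liftQ σ hkerle ∘ₗ e.symm.toLinearMap with hσbar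
  have heq : ∀ v, e (Submodule.Quotient.mk v) = π v := fun v => rfl
  have hσbarπ : ∀ v, σbar (π v) = σ v := by
    intro v
    have h1 : e.symm (π v) = Submodule.Quotient.mk v := by
      apply e.injective; rw [LinearEquiv.apply_symm_apply, heq]
    show (LinearMap.ker π).liftQ σ hkerle (e.symm (π v)) = σ v
    rw [h1, Submodule.liftQ_apply]
  set τ : B →ₗ[S] B := σbar ∘ₗ A'.mkQ with hτ
  have hτmem : ∀ xb : B, xb - τ xb ∈ A' := by
    intro xb
    obtain ⟨v, hv⟩ := hπ (A'.mkQ xb)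
    have h1 : τ xb = σ v := by
      show σbar (A'.mkQ xb) = σ v
      rw [← hv, hσbarπ]
    rw [← Submodule.Quotient.mk_eq_zero A']
    have h2 : A'.mkQ (σ v) = A'.mkQ xb := by
      have := congrArg (fun f : (Fin l → S) →ₗ[S] (B ⧸ A') => f v) hmkσ
      simpa using this.trans hv
    show A'.mkQ (xb - τ xb) = 0
    rw [map_sub, h1, h2, sub_self]
  have hτA : ∀ xb : B, xb ∈ A' → τ xb = 0 := by
    intro xb hxb
    have h0 : A'.mkQ xb = 0 := (Submodule.Quotient.mk_eq_zero A').mpr hxb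
    show σbar (A'.mkQ xb) = 0
    rw [h0, map_zero]
  refine ⟨(Submodule.comapSubtypeEquivOfLe hAB).toLinearMap ∘ₗ
    LinearMap.codRestrict A' (LinearMap.id - τ) (fun xb => hτmem xb), ?_⟩
  intro xb hxb
  have h1 : τ xb = 0 := hτA xb ((hmemA' xb).mpr hxb)
  simp [Submodule.comapSubtypeEquivOfLe_apply_coe, LinearMap.codRestrict, h1]

lemma exists_chain (S : Type) [Ring S] {P : Type} [AddCommGroup P] [Module S P]
    (hcg : ∃ s : Set P, s.Countable ∧ Submodule.span S s = ⊤)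
    (h : ∀ t : Finset P, ∃ A : Submodule S P, (↑t : Set P) ⊆ A ∧
      Module.FinitePresentation S A ∧ IsPureSubmodule S A) :
    ∃ A : ℕ → Submodule S P, (∀ n, A n ≤ A (n + 1)) ∧
      (∀ n, Module.FinitePresentation S (A n)) ∧ (∀ n, IsPureSubmodule S (A n)) ∧
      (⨆ n, A n) = ⊤ := by
  classical
  obtain ⟨s0, hc, hspan⟩ := hcg
  obtain ⟨x, hx⟩ := (hc.insert 0).exists_eq_range ⟨0, Set.mem_insert 0 s0⟩
  have hxspan : Submodule.span S (Set.range x) = ⊤ := by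
    rw [← hx, Submodule.span_insert_zero, hspan]
  have key : ∀ (B : Submodule S P), Module.FinitePresentation S B → ∀ p : P,
      ∃ C : Submodule S P, B ≤ C ∧ p ∈ C ∧ Module.FinitePresentation S C ∧
        IsPureSubmodule S C := by
    intro B hB p
    haveI := hB
    obtain ⟨t, ht⟩ := Module.Finite.iff_fg.mp (inferInstance : Module.Finite S B)
    obtain ⟨C, hsub, hfp, hpure⟩ := h (insert p t)
    refine ⟨C, ?_, ?_, hfp, hpure⟩
    · rw [← ht, Submodule.span_le]
      intro z hz
      exact hsub (by exact_mod_cast Finset.mem_insert_of_mem hz)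
    · exact hsub (by exact_mod_cast Finset.mem_insert_self p t)
  let T := {B : Submodule S P // Module.FinitePresentation S B ∧ IsPureSubmodule S B}
  have step : ∀ (B : T) (p : P), ∃ C : T, B.1 ≤ C.1 ∧ p ∈ C.1 := by
    rintro ⟨B, hfp, hp⟩ p
    obtain ⟨C, h1, h2, h3, h4⟩ := key B hfp p
    exact ⟨⟨C, h3, h4⟩, h1, h2⟩
  choose st hst1 hst2 using step
  have base : ∃ B : T, x 0 ∈ B.1 := by
    obtain ⟨C, hsub, h3, h4⟩ := h {x 0}
    exact ⟨⟨C, h3, h4⟩, hsub (by simp)⟩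
  obtain ⟨B0, hB0⟩ := base
  let Aseq : ℕ → T := fun n => Nat.rec B0 (fun n prev => st prev (x (n + 1))) n
  have hxn : ∀ n, x n ∈ (Aseq n).1 := by
    intro n
    cases n with
    | zero => exact hB0
    | succ n => exact hst2 (Aseq n) (x (n + 1))
  refine ⟨fun n => (Aseq n).1, fun n => hst1 (Aseq n) (x (n + 1)),
    fun n => (Aseq n).2.1, fun n => (Aseq n).2.2, ?_⟩
  rw [← top_le_iff, ← hxspan, Submodule.span_le]
  rintro _ ⟨n, rfl⟩
  exact (le_iSup (fun n => (Aseq n).1) n) (hxn n)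


set_option maxHeartbeats 1000000 in
lemma assemble (S : Type) [Ring S] {P : Type} [AddCommGroup P] [Module S P]
    (A : ℕ → Submodule S P) (hmono : ∀ n, A n ≤ A (n + 1))
    (hfp : ∀ n, Module.FinitePresentation S (A n))
    (ρ : ∀ n, (A (n + 1)) →ₗ[S] (A n))
    (hρ : ∀ (n : ℕ) (x : A (n + 1)), (x : P) ∈ A n → ((ρ n x : P)) = (x : P))
    (htop : (⨆ n, A n) = ⊤) : IsPureProjective S P := by
  classical
  have hm : Monotone A := monotone_nat_of_le_succ hmono
  set K : ∀ n : ℕ, Submodule S (A (n + 1)) := fun n => LinearMap.ker (ρ n) with hK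
  -- the canonical projection onto the kernel
  have hφmem : ∀ (n : ℕ) (xb : A (n + 1)),
      ((LinearMap.id : (A (n+1)) →ₗ[S] (A (n+1))) - Submodule.inclusion (hmono n) ∘ₗ ρ n) xb ∈ K n := by
    intro n xb
    have h1 : ρ n (Submodule.inclusion (hmono n) (ρ n xb)) = ρ n xb := by
      apply Subtype.ext
      exact hρ n _ (ρ n xb).2
    show ρ n (xb - Submodule.inclusion (hmono n) (ρ n xb)) = 0
    rw [map_sub, h1, sub_self]
  set φ : ∀ n : ℕ, (A (n + 1)) →ₗ[S] (K n) := fun n =>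
    LinearMap.codRestrict (K n) ((LinearMap.id : (A (n+1)) →ₗ[S] (A (n+1))) - Submodule.inclusion (hmono n) ∘ₗ ρ n)
      (hφmem n) with hφ
  have hφval : ∀ (n : ℕ) (xb : A (n + 1)),
      ((φ n xb : A (n + 1)) : P) = (xb : P) - ((ρ n xb : A n) : P) := by
    intro n xb
    rfl
  have hφsurj : ∀ n, Function.Surjective (φ n) := by
    intro n w
    refine ⟨(w : A (n + 1)), ?_⟩
    apply Subtype.ext
    show (w : A (n + 1)) - Submodule.inclusion (hmono n) (ρ n (w : A (n + 1))) = (w : A (n + 1))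
    have : ρ n (w : A (n + 1)) = 0 := w.2
    rw [this, map_zero, sub_zero]
  have hkerφ : ∀ n, LinearMap.ker (φ n) = Submodule.comap (A (n + 1)).subtype (A n) := by
    intro n
    ext xb
    constructor
    · intro hxb
      have h0 : (xb : A (n+1)) - Submodule.inclusion (hmono n) (ρ n xb) = 0 :=
        congrArg Subtype.val hxb
      have : (xb : P) = ((ρ n xb : A n) : P) := by
        have := congrArg (Subtype.val : A (n+1) → P) (sub_eq_zero.mp h0)
        simpa using this
      show (xb : P) ∈ A n
      rw [this]; exact (ρ n xb).2
    · intro hxb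
      have h1 : ((ρ n xb : A n) : P) = (xb : P) := hρ n xb hxb
      apply Subtype.ext
      apply Subtype.ext
      show ((xb : A (n+1)) : P) - _ = (0 : P)
      simpa [h1] using sub_self ((xb : A (n+1)) : P)
  haveI hfpK : ∀ n, Module.FinitePresentation S (K n) := by
    intro n
    haveI := hfp n
    haveI := hfp (n + 1)
    haveI : Module.Finite S (Submodule.comap (A (n + 1)).subtype (A n)) :=
      Module.Finite.equiv (Submodule.comapSubtypeEquivOfLe (hmono n)).symm
    exact Module.finitePresentation_of_surjective (φ n) (hφsurj n)
      (by rw [hkerφ n]; exact Module.Finite.iff_fg.mp inferInstance)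
  -- the summands
  set F : ℕ → ModuleCat.{0} S := fun n =>
    Nat.casesOn n (ModuleCat.of S (A 0)) (fun m => ModuleCat.of S (K m)) with hFdef
  have hF : ∀ n, Module.FinitePresentation S (F n) := by
    intro n
    cases n with
    | zero => exact hfp 0
    | succ m => exact hfpK m
  set D := ⨁ n, (F n : Type) with hD
  set jmap : ∀ n : ℕ, (F n : Type) →ₗ[S] P := fun n =>
    Nat.casesOn n ((A 0).subtype) (fun m => (A (m + 1)).subtype ∘ₗ (K m).subtype) with hjmap
  set r : D →ₗ[S] P := DirectSum.toModule S ℕ P jmap with hr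
  -- the recursively defined coordinate maps
  obtain ⟨g, hg0, hgsucc'⟩ : ∃ g : ∀ n : ℕ, (A n) →ₗ[S] D,
      g 0 = DirectSum.lof S ℕ (fun i => (F i : Type)) 0 ∧ ∀ m : ℕ,
        g (m + 1) = g m ∘ₗ ρ m + (DirectSum.lof S ℕ (fun i => (F i : Type)) (m + 1)) ∘ₗ φ m :=
    ⟨fun n => Nat.rec (DirectSum.lof S ℕ (fun i => (F i : Type)) 0)
      (fun m gm => gm ∘ₗ ρ m + (DirectSum.lof S ℕ (fun i => (F i : Type)) (m + 1)) ∘ₗ φ m) n,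
      rfl, fun m => rfl⟩
  have hgsucc : ∀ (m : ℕ) (x : A (m + 1)),
      g (m + 1) x = g m (ρ m x) + DirectSum.lof S ℕ (fun i => (F i : Type)) (m + 1) (φ m x) := by
    intro m x
    rw [hgsucc' m]
    rfl
  have hrg : ∀ (n : ℕ) (xa : A n), r (g n xa) = (xa : P) := by
    intro n
    induction n with
    | zero =>
      intro xa
      rw [hg0]
      exact DirectSum.toModule_lof (ι := ℕ) (M := fun i => ((F i : Type))) (φ := jmap) S 0 xa
    | succ m ih =>
      intro xa
      rw [hgsucc m xa, map_add, ih (ρ m xa)]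
      have h2 : r (DirectSum.lof S ℕ (fun i => (F i : Type)) (m + 1) (φ m xa))
          = ((φ m xa : A (m + 1)) : P) :=
        DirectSum.toModule_lof (ι := ℕ) (M := fun i => ((F i : Type))) (φ := jmap) S (m + 1) (φ m xa)
      rw [h2, hφval m xa]
      abel
  have hcompat : ∀ (n : ℕ) (x : A (n + 1)) (hx : (x : P) ∈ A n),
      g (n + 1) x = g n ⟨(x : P), hx⟩ := by
    intro n x hx
    rw [hgsucc n x]
    have h1 : ρ n x = ⟨(x : P), hx⟩ := Subtype.ext (hρ n x hx)
    have h2 : φ n x = 0 := by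
      apply Subtype.ext
      apply Subtype.ext
      show ((x : A (n+1)) : P) - _ = (0 : P)
      simpa [hρ n x hx] using sub_self ((x : A (n+1)) : P)
    rw [h1, h2, map_zero, add_zero]
  have hcompat' : ∀ (m n : ℕ) (hmn : m ≤ n) (x : P) (hx : x ∈ A m),
      g n ⟨x, hm hmn hx⟩ = g m ⟨x, hx⟩ := by
    intro m n hmn
    induction n, hmn using Nat.le_induction with
    | base => intro x hx; rfl
    | succ n hmn ih =>
      intro x hx
      have hxn : x ∈ A n := hm hmn hx
      have := hcompat n ⟨x, hm (Nat.le_succ n) hxn⟩ hxn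
      rw [show (⟨x, hm (hmn.trans (Nat.le_succ n)) hx⟩ : A (n+1))
          = ⟨x, hm (Nat.le_succ n) hxn⟩ from rfl, this]
      exact ih x hx
  have hex : ∀ p : P, ∃ n, p ∈ A n := by
    intro p
    have : p ∈ ⨆ n, A n := by rw [htop]; trivial
    exact (Submodule.mem_iSup_of_chain ⟨A, hm⟩ p).mp this
  choose ν hν using hex
  set sfun : P → D := fun p => g (ν p) ⟨p, hν p⟩ with hsfun
  have hindep : ∀ (p : P) (n : ℕ) (hp : p ∈ A n), sfun p = g n ⟨p, hp⟩ := by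
    intro p n hp
    have h1 : g (max (ν p) n) ⟨p, hm (le_max_left _ _) (hν p)⟩ = g (ν p) ⟨p, hν p⟩ :=
      hcompat' (ν p) (max (ν p) n) (le_max_left _ _) p (hν p)
    have h2 : g (max (ν p) n) ⟨p, hm (le_max_right _ _) hp⟩ = g n ⟨p, hp⟩ :=
      hcompat' n (max (ν p) n) (le_max_right _ _) p hp
    show g (ν p) ⟨p, hν p⟩ = g n ⟨p, hp⟩
    rw [← h1]
    exact h2
  set s : P →ₗ[S] D :=
    { toFun := sfun
      map_add' := by
        intro p q
        show sfun (p + q) = sfun p + sfun q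
        have hpq : p + q ∈ A (max (ν p) (ν q)) :=
          add_mem (hm (le_max_left _ _) (hν p)) (hm (le_max_right _ _) (hν q))
        rw [hindep (p + q) (max (ν p) (ν q)) hpq,
          hindep p (max (ν p) (ν q)) (hm (le_max_left _ _) (hν p)),
          hindep q (max (ν p) (ν q)) (hm (le_max_right _ _) (hν q)),
          show (⟨p + q, hpq⟩ : A (max (ν p) (ν q)))
            = ⟨p, hm (le_max_left _ _) (hν p)⟩ + ⟨q, hm (le_max_right _ _) (hν q)⟩ from rfl,
          map_add]
      map_smul' := by
        intro c p
        show sfun (c • p) = (RingHom.id S) c • sfun p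
        have hcp : c • p ∈ A (ν p) := Submodule.smul_mem _ c (hν p)
        rw [hindep (c • p) (ν p) hcp,
          show (⟨c • p, hcp⟩ : A (ν p)) = c • ⟨p, hν p⟩ from rfl, map_smul]
        rfl } with hs
  refine ⟨ℕ, F, hF, s, r, ?_⟩
  apply LinearMap.ext
  intro p
  show r (sfun p) = p
  rw [hsfun]
  exact hrg (ν p) ⟨p, hν p⟩

/-- a countably generated module in which every finite tuple is
contained in a finitely presented pure submodule is pure-projective. -/
theorem stmt_11 (S : Type) [Ring S] (P : Type) [AddCommGroup P] [Module S P]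
    (hcg : ∃ s : Set P, s.Countable ∧ Submodule.span S s = ⊤)
    (h : ∀ t : Finset P, ∃ A : Submodule S P, (↑t : Set P) ⊆ A ∧
      Module.FinitePresentation S A ∧ IsPureSubmodule S A) :
    IsPureProjective S P := by
  obtain ⟨A, hmono, hfp, hpure, htop⟩ := exists_chain S hcg h
  have hρ : ∀ n, ∃ ρ : (A (n + 1)) →ₗ[S] (A n),
      ∀ x : (A (n + 1)), (x : P) ∈ A n → ((ρ x : P)) = (x : P) :=
    fun n => exists_retraction S (hmono n) (hfp n) (hpure n) (hfp (n + 1))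
  choose ρ hρ' using hρ
  exact assemble S A hmono hfp ρ hρ' htop
end
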